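/- arXiv:math/0410277 — 3 statements merged into one kernel-verified Lean document; each statement's English description precedes it below -/
import Mathlib

section
/- The control system ẋ = A₁(x)u₁ + A₂(x)u₂ on S², with A₁ = M₁B₁ and A₂ = B₂, admits no locally Lipschitz stabilizing state feedback: there is no locally Lipschitz k = (k₁,k₂): S² → R² such that the closed-loop system ẋ = A₁(x)k₁(x) + A₂(x)k₂(x) is globally asymptotically stable to A = {q, −q}. -/
open Set MeasureTheory Metric Filter Manifold

noncomputable section
open scoped Classical

/-- Euclidean 3-space. -/
abbrev E3 := EuclideanSpace ℝ (Fin 3)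

/-- The unit sphere `S² ⊆ ℝ³`. -/
def S2 : Set E3 := Metric.sphere 0 1

/-- `q = (0,0,1)`. -/
def qv : E3 := EuclideanSpace.single (2 : Fin 3) (1 : ℝ)

/-- `r = (0,1,0)`. -/
def rv : E3 := EuclideanSpace.single (1 : Fin 3) (1 : ℝ)

/-- Geodesic distance on `S²`: `G(x,x') = arccos (x ⬝ x')`. -/
def geo (x y : E3) : ℝ := Real.arccos (inner ℝ x y)

/-- `V_q(x) = min {G(x,q), G(x,-q)}`, the geodesic distance to `A = {±q}`. -/
def Vq (x : E3) : ℝ := min (geo x qv) (geo x (-qv))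

/-- `V_r(x) = max {G(x,r), G(x,-r)}`. -/
def Vr (x : E3) : ℝ := max (geo x rv) (geo x (-rv))

/-- The Lyapunov function `V(x) = V_q(x)(1 + V_r(x))`. -/
def Vlyap (x : E3) : ℝ := Vq x * (1 + Vr x)

/-- Cross product on `ℝ³`. -/
def cross3 (x y : E3) : E3 :=
  (WithLp.equiv 2 (Fin 3 → ℝ)).symm
    (crossProduct ((WithLp.equiv 2 (Fin 3 → ℝ)) x) ((WithLp.equiv 2 (Fin 3 → ℝ)) y))

/-- `B₁(x) = q - (x⬝q) x`. -/
def B1 (x : E3) : E3 := qv - (inner ℝ x qv : ℝ) • x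

/-- `B₂(x) = x × q`. -/
def B2 (x : E3) : E3 := cross3 x qv

/-- `A₁ = M₁ B₁`. -/
def A1 (M₁ : E3 → ℝ) (x : E3) : E3 := M₁ x • B1 x

/-- The attractor `A = {q, -q}`. -/
def attrA : Set E3 := {qv, -qv}

/-- The standing hypotheses on the smooth cutoff `M₁ : S² → [0,1]`. -/
structure M1Hyp (M₁ : E3 → ℝ) : Prop where
  smooth : ContMDiff (𝓡 2) 𝓘(ℝ, ℝ) (⊤ : ℕ∞) (fun p : Metric.sphere (0 : E3) 1 => M₁ ↑p)
  mem_Icc : ∀ x ∈ S2, M₁ x ∈ Icc (0 : ℝ) 1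
  zero_iff : ∀ x ∈ S2,
    (M₁ x = 0 ↔ x 0 / 4 ≤ x 1 ∧ x 1 ≤ 3 * x 0 / 4 ∧ Real.pi / 4 ≤ Vq x)
  one_of : ∀ x ∈ S2,
    (7 * x 0 / 8 ≤ x 1 ∨ x 1 ≤ x 0 / 8 ∨ Vq x ≤ Real.pi / 8) → M₁ x = 1

/-- A control with values in `ℝ²`: measurable and locally essentially bounded. -/
def IsControl2 (u : ℝ → ℝ × ℝ) : Prop :=
  Measurable u ∧
  ∀ T > (0 : ℝ), ∃ C, ∀ᵐ t ∂(volume.restrict (Icc (0 : ℝ) T)), ‖u t‖ ≤ C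

/-- An (open-loop, globally defined) trajectory of `ẋ = A₁(x)u₁ + A₂(x)u₂` on `S²`. -/
def SphereTraj (M₁ : E3 → ℝ) (u : ℝ → ℝ × ℝ) (x : ℝ → E3) : Prop :=
  ContinuousOn x (Ici 0) ∧ (∀ t, 0 ≤ t → x t ∈ S2) ∧
  ∀ᵐ t ∂(volume.restrict (Ici (0 : ℝ))),
    HasDerivAt x ((u t).1 • A1 M₁ (x t) + (u t).2 • B2 (x t)) t

/-- The family of relatively open precompact subsets of `S²` containing `A`. -/
def PNS (A : Set E3) : Set (Set E3) :=
  {O | A ⊆ O ∧ O ⊆ S2 ∧ (∃ V, IsOpen V ∧ O = V ∩ S2) ∧ IsCompact (closure O)}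

/-- A (classical, forward-time) solution of the closed-loop system
`ẋ = A₁(x)k₁(x) + A₂(x)k₂(x)` on `S²`. -/
def ClosedLoopSol (M₁ : E3 → ℝ) (kfb : E3 → ℝ × ℝ) (x : ℝ → E3) : Prop :=
  (∀ t, 0 ≤ t → x t ∈ S2) ∧
  ∀ t, 0 ≤ t →
    HasDerivWithinAt x
      ((kfb (x t)).1 • A1 M₁ (x t) + (kfb (x t)).2 • B2 (x t)) (Ici 0) t


/-! ### Auxiliary development for the impossibility proof -/

namespace SphereNoFB

/-- The closed-loop vector field. -/
def Fvf (M₁ : E3 → ℝ) (kfb : E3 → ℝ × ℝ) (x : E3) : E3 :=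
  (kfb x).1 • A1 M₁ x + (kfb x).2 • B2 x

lemma norm_qv : ‖qv‖ = 1 := by simp [qv]

lemma qv_mem : qv ∈ S2 := by
  simp [S2, mem_sphere_zero_iff_norm, norm_qv]

lemma negqv_mem : -qv ∈ S2 := by
  simp [S2, mem_sphere_zero_iff_norm, norm_qv]

lemma qv_ne_negqv : qv ≠ -qv := by
  intro h
  have h2 : qv = 0 := by
    have h3 : qv + qv = 0 := by nth_rewrite 1 [h]; simp
    rw [← two_smul ℝ] at h3
    simpa using smul_eq_zero.mp h3
  have : ‖qv‖ = (1:ℝ) := norm_qv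
  rw [h2] at this; simp at this

lemma dist_qv_negqv : dist qv (-qv) = 2 := by
  rw [dist_eq_norm, sub_neg_eq_add, ← two_smul ℝ, norm_smul]
  simp [norm_qv]

lemma inner_qv_qv : (inner ℝ qv qv : ℝ) = 1 := by
  rw [real_inner_self_eq_norm_sq]; simp [norm_qv]

lemma B1_qv : B1 qv = 0 := by
  rw [B1, inner_qv_qv]; simp

lemma B1_negqv : B1 (-qv) = 0 := by
  rw [B1, inner_neg_left, inner_qv_qv]; simp

lemma B2_qv : B2 qv = 0 := by
  simp [B2, cross3, cross_self]

lemma B2_negqv : B2 (-qv) = 0 := by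
  simp [B2, cross3]

lemma Fvf_qv (M₁ : E3 → ℝ) (kfb : E3 → ℝ × ℝ) : Fvf M₁ kfb qv = 0 := by
  simp [Fvf, A1, B1_qv, B2_qv]

lemma Fvf_negqv (M₁ : E3 → ℝ) (kfb : E3 → ℝ × ℝ) : Fvf M₁ kfb (-qv) = 0 := by
  simp [Fvf, A1, B1_negqv, B2_negqv]

lemma sol_deriv {M₁ : E3 → ℝ} {kfb : E3 → ℝ × ℝ} {x : ℝ → E3}
    (h : ClosedLoopSol M₁ kfb x) {t : ℝ} (ht : 0 ≤ t) :
    HasDerivWithinAt x (Fvf M₁ kfb (x t)) (Ici 0) t := h.2 t ht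

lemma const_sol {M₁ : E3 → ℝ} {kfb : E3 → ℝ × ℝ} {p : E3} (hp : p ∈ S2)
    (h0 : Fvf M₁ kfb p = 0) : ClosedLoopSol M₁ kfb (fun _ => p) := by
  refine ⟨fun _ _ => hp, fun t ht => ?_⟩
  have : HasDerivWithinAt (fun _ : ℝ => p) 0 (Ici 0) t := hasDerivWithinAt_const _ _ _
  have h0' : (kfb p).1 • A1 M₁ p + (kfb p).2 • B2 p = 0 := h0
  rw [h0']
  exact this

lemma attrA_nonempty : attrA.Nonempty := ⟨qv, by left; rfl⟩

lemma infDist_attrA (x : E3) :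
    Metric.infDist x attrA = min (dist x qv) (dist x (-qv)) := by
  apply le_antisymm
  · apply le_min
    · exact Metric.infDist_le_dist_of_mem (by left; rfl)
    · exact Metric.infDist_le_dist_of_mem (by right; rfl)
  · refine le_of_not_gt fun hlt => ?_
    obtain ⟨y, hy, hd⟩ := (Metric.infDist_lt_iff attrA_nonempty).mp hlt
    rcases hy with h | h
    · rw [h] at hd; exact absurd hd (not_lt.mpr (min_le_left _ _))
    · rw [h] at hd; exact absurd hd (not_lt.mpr (min_le_right _ _))

lemma sol_cont {M₁ : E3 → ℝ} {kfb : E3 → ℝ × ℝ} {x : ℝ → E3}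
    (h : ClosedLoopSol M₁ kfb x) : ContinuousOn x (Ici 0) :=
  fun t ht => (h.2 t ht).continuousWithinAt

lemma sol_shift {M₁ : E3 → ℝ} {kfb : E3 → ℝ × ℝ} {x : ℝ → E3}
    (hx : ClosedLoopSol M₁ kfb x) {T : ℝ} (hT : 0 ≤ T) :
    ClosedLoopSol M₁ kfb (fun s => x (T + s)) := by
  constructor
  · intro t ht; exact hx.1 _ (by linarith)
  · intro t ht
    have h1 : HasDerivWithinAt x (Fvf M₁ kfb (x (T + t))) (Ici 0) (T + t) :=
      sol_deriv hx (by linarith)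
    have h2 : HasDerivWithinAt (fun s : ℝ => T + s) 1 (Ici 0) t :=
      ((hasDerivAt_id t).const_add T).hasDerivWithinAt
    have h3 := HasDerivWithinAt.scomp (t' := Ici (0:ℝ)) t h1 h2
      (fun s hs => by simp only [mem_Ici] at *; linarith)
    rw [one_smul] at h3; exact h3

/-- Elementary estimate for differences of scalar products. -/
lemma dist_smul_smul {F : Type*} [NormedAddCommGroup F] [NormedSpace ℝ F]
    (a b : ℝ) (u v : F) :
    dist (a • u) (b • v) ≤ |a| * dist u v + |a - b| * ‖v‖ := by
  rw [dist_eq_norm, dist_eq_norm]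
  have h : a • u - b • v = a • (u - v) + (a - b) • v := by
    rw [smul_sub, sub_smul]; abel
  rw [h]
  calc ‖a • (u - v) + (a - b) • v‖ ≤ ‖a • (u - v)‖ + ‖(a - b) • v‖ := norm_add_le _ _
    _ = |a| * ‖u - v‖ + |a - b| * ‖v‖ := by rw [norm_smul, norm_smul]; simp [Real.norm_eq_abs]


/-! ### Lipschitz continuity of the closed-loop field -/

/-- `M₁` is locally Lipschitz on the sphere (from manifold smoothness). -/
lemma M1_lip (M₁ : E3 → ℝ)
    (hsm : ContMDiff (𝓡 2) 𝓘(ℝ, ℝ) ((⊤ : ℕ∞) : WithTop ℕ∞) (fun p : Metric.sphere (0 : E3) 1 => M₁ ↑p))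
    {p : E3} (hp : p ∈ S2) :
    ∃ K : NNReal, ∃ ε > (0:ℝ), LipschitzOnWith K M₁ (ball p ε ∩ S2) := by
  haveI : Fact (Module.finrank ℝ E3 = 2 + 1) := Fact.mk (by simp)
  have hpn : ‖p‖ = 1 := by simpa [S2] using hp
  set θ : ContDiffBump p := ⟨1/4, 1/2, by norm_num, by norm_num⟩ with hθ
  set χ : E3 → E3 := fun x => θ x • x + (1 - θ x) • p with hχ
  have hχ_smooth : ContDiff ℝ ((⊤:ℕ∞) : WithTop ℕ∞) χ := by
    apply ContDiff.add
    · exact θ.contDiff.smul contDiff_id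
    · exact (contDiff_const.sub θ.contDiff).smul contDiff_const
  have hχ_ne : ∀ x, χ x ≠ 0 := by
    intro x
    by_cases hx : x ∈ ball p (1/2)
    · have h1 : χ x - p = θ x • (x - p) := by
        simp only [hχ, smul_sub, sub_smul, one_smul]; abel
      have h2 : ‖χ x - p‖ < 1/2 := by
        rw [h1, norm_smul]
        calc ‖θ x‖ * ‖x - p‖ ≤ 1 * ‖x - p‖ := by
              apply mul_le_mul_of_nonneg_right _ (norm_nonneg _)
              rw [Real.norm_eq_abs, abs_of_nonneg (θ.nonneg' x)]
              exact θ.le_one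
          _ < 1/2 := by rw [one_mul, ← dist_eq_norm]; exact hx
      intro h0
      rw [h0] at h2
      simp only [zero_sub, norm_neg] at h2
      rw [hpn] at h2; linarith
    · have hθ0 : θ x = 0 := by
        apply θ.zero_of_le_dist
        rw [mem_ball, not_lt] at hx
        simpa [hθ, dist_comm] using hx
      have : χ x = p := by simp [hχ, hθ0]
      rw [this]; intro h; rw [h] at hpn; simp at hpn
  have hχ_id : ∀ x ∈ ball p (1/4), χ x = x := by
    intro x hx
    have : θ x = 1 := θ.one_of_mem_closedBall (ball_subset_closedBall hx)
    simp [hχ, this]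
  set f : E3 → E3 := fun x => ‖χ x‖⁻¹ • χ x with hf
  have hf_smooth : ContDiff ℝ ((⊤:ℕ∞) : WithTop ℕ∞) f := by
    rw [contDiff_iff_contDiffAt]
    intro x
    have h1 : ContDiffAt ℝ ((⊤:ℕ∞) : WithTop ℕ∞) χ x := hχ_smooth.contDiffAt
    have h2 : ContDiffAt ℝ ((⊤:ℕ∞) : WithTop ℕ∞) (fun y => ‖χ y‖) x := h1.norm ℝ (hχ_ne x)
    exact (h2.inv (by simp [norm_ne_zero_iff.mpr (hχ_ne x)])).smul h1
  have hf_mem : ∀ x, f x ∈ Metric.sphere (0 : E3) 1 := by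
    intro x
    rw [mem_sphere_zero_iff_norm, hf]
    rw [norm_smul, norm_inv, norm_norm]
    exact inv_mul_cancel₀ (norm_ne_zero_iff.mpr (hχ_ne x))
  have hf' : ContMDiff 𝓘(ℝ, E3) (𝓡 2) ((⊤ : ℕ∞) : WithTop ℕ∞) (Set.codRestrict f _ hf_mem) :=
    ContMDiff.codRestrict_sphere (contMDiff_iff_contDiff.mpr hf_smooth) hf_mem
  have hcomp : ContDiff ℝ ((⊤:ℕ∞) : WithTop ℕ∞) (fun x => M₁ (f x)) := by
    have := hsm.comp hf'
    exact contMDiff_iff_contDiff.mp this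
  have hcomp1 : ContDiffAt ℝ 1 (fun x => M₁ (f x)) p := by
    apply (hcomp.contDiffAt (x := p)).of_le
    exact_mod_cast le_top
  obtain ⟨K, t, ht, hK⟩ := hcomp1.exists_lipschitzOnWith
  obtain ⟨ε0, hε0, hball⟩ := Metric.mem_nhds_iff.mp ht
  refine ⟨K, min ε0 (1/4), by positivity, ?_⟩
  have heq : ∀ x ∈ ball p (min ε0 (1/4)) ∩ S2, M₁ (f x) = M₁ x := by
    intro x hx
    obtain ⟨hx1, hx2⟩ := hx
    have hxb : x ∈ ball p (1/4) := ball_subset_ball (min_le_right _ _) hx1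
    have hχx : χ x = x := hχ_id x hxb
    have hxn : ‖x‖ = 1 := by simpa [S2] using hx2
    have : f x = x := by rw [hf]; simp only [hχx, hxn]; simp
    rw [this]
  intro x hx y hy
  have h1 := hK (hball (ball_subset_ball (min_le_left _ _) hx.1))
    (hball (ball_subset_ball (min_le_left _ _) hy.1))
  simp only at h1
  rwa [heq x hx, heq y hy] at h1

/-- `B₂` as a linear map. -/
def B2lin : E3 →ₗ[ℝ] E3 where
  toFun x := cross3 x qv
  map_add' x y := by
    simp only [cross3]
    rw [show (WithLp.equiv 2 (Fin 3 → ℝ)) (x + y)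
        = (WithLp.equiv 2 (Fin 3 → ℝ)) x + (WithLp.equiv 2 (Fin 3 → ℝ)) y from rfl]
    rw [map_add]
    rfl
  map_smul' c x := by
    simp only [cross3, RingHom.id_apply]
    rw [show (WithLp.equiv 2 (Fin 3 → ℝ)) (c • x)
        = c • (WithLp.equiv 2 (Fin 3 → ℝ)) x from rfl]
    rw [_root_.map_smul]
    rfl

lemma B2_eq_lin (x : E3) : B2 x = B2lin x := rfl

lemma B2_contDiff : ContDiff ℝ ((⊤:ℕ∞) : WithTop ℕ∞) B2 := by
  have := (LinearMap.toContinuousLinearMap B2lin).contDiff (n := ((⊤:ℕ∞) : WithTop ℕ∞))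
  exact this

lemma B1_contDiff : ContDiff ℝ ((⊤:ℕ∞) : WithTop ℕ∞) B1 := by
  unfold B1
  apply ContDiff.sub contDiff_const
  exact ContDiff.smul (contDiff_id.inner ℝ (contDiff_const (c := qv))) contDiff_id

/-- The closed-loop field is locally Lipschitz along the sphere. -/
lemma F_loc_lip {M₁ : E3 → ℝ} {kfb : E3 → ℝ × ℝ} (hM₁ : M1Hyp M₁)
    (hLip : ∀ x₀ ∈ S2, ∃ ε > (0 : ℝ), ∃ L : NNReal, LipschitzOnWith L kfb (ball x₀ ε ∩ S2))
    {p : E3} (hp : p ∈ S2) :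
    ∃ ε > (0:ℝ), ∃ L : ℝ, 0 ≤ L ∧ ∀ x ∈ ball p ε ∩ S2, ∀ y ∈ ball p ε ∩ S2,
      dist (Fvf M₁ kfb x) (Fvf M₁ kfb y) ≤ L * dist x y := by
  obtain ⟨ε₁, hε₁, Lk, hk⟩ := hLip p hp
  obtain ⟨LM, ε₂, hε₂, hM⟩ := M1_lip M₁ hM₁.smooth hp
  obtain ⟨LB1, t₁, ht₁, hB1⟩ := ((B1_contDiff.contDiffAt (x := p)).of_le
    (by exact_mod_cast le_top : (1 : WithTop ℕ∞) ≤ _)).exists_lipschitzOnWith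
  obtain ⟨ε₃, hε₃, hb₃⟩ := Metric.mem_nhds_iff.mp ht₁
  obtain ⟨LB2, t₂, ht₂, hB2⟩ := ((B2_contDiff.contDiffAt (x := p)).of_le
    (by exact_mod_cast le_top : (1 : WithTop ℕ∞) ≤ _)).exists_lipschitzOnWith
  obtain ⟨ε₄, hε₄, hb₄⟩ := Metric.mem_nhds_iff.mp ht₂
  set ε := min (min ε₁ ε₂) (min ε₃ ε₄) with hεdef
  have hεpos : 0 < ε := lt_min (lt_min hε₁ hε₂) (lt_min hε₃ hε₄)
  set s := ball p ε ∩ S2 with hsdef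
  have hs1 : s ⊆ ball p ε₁ ∩ S2 := fun x hx =>
    ⟨ball_subset_ball ((min_le_left _ _).trans (min_le_left _ _)) hx.1, hx.2⟩
  have hs2 : s ⊆ ball p ε₂ ∩ S2 := fun x hx =>
    ⟨ball_subset_ball ((min_le_left _ _).trans (min_le_right _ _)) hx.1, hx.2⟩
  have hs3 : s ⊆ t₁ := fun x hx =>
    hb₃ (ball_subset_ball ((min_le_right _ _).trans (min_le_left _ _)) hx.1)
  have hs4 : s ⊆ t₂ := fun x hx =>
    hb₄ (ball_subset_ball ((min_le_right _ _).trans (min_le_right _ _)) hx.1)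
  have hp1 : p ∈ ball p ε₁ ∩ S2 := ⟨mem_ball_self hε₁, hp⟩
  have hp3 : p ∈ t₁ := hb₃ (mem_ball_self hε₃)
  have hp4 : p ∈ t₂ := hb₄ (mem_ball_self hε₄)
  -- bounds
  set Ck : ℝ := ‖kfb p‖ + Lk * ε₁ with hCkdef
  have hCk0 : 0 ≤ Ck := by positivity
  have hCk : ∀ x ∈ s, ‖kfb x‖ ≤ Ck := by
    intro x hx
    have h1 : dist (kfb x) (kfb p) ≤ Lk * dist x p := hk.dist_le_mul x (hs1 hx) p hp1
    have h2 : dist x p ≤ ε₁ := le_of_lt (mem_ball.mp (hs1 hx).1)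
    have h3 : ‖kfb x‖ - ‖kfb p‖ ≤ dist (kfb x) (kfb p) := by
      rw [dist_eq_norm]; exact norm_sub_norm_le _ _
    have h4 : (Lk : ℝ) * dist x p ≤ Lk * ε₁ :=
      mul_le_mul_of_nonneg_left h2 (by positivity)
    rw [hCkdef]; linarith
  set C1 : ℝ := ‖B1 p‖ + LB1 * ε with hC1def
  have hC10 : 0 ≤ C1 := by positivity
  have hC1 : ∀ x ∈ s, ‖B1 x‖ ≤ C1 := by
    intro x hx
    have h1 : dist (B1 x) (B1 p) ≤ LB1 * dist x p := hB1.dist_le_mul x (hs3 hx) p hp3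
    have h2 : dist x p ≤ ε := le_of_lt (mem_ball.mp hx.1)
    have h3 : ‖B1 x‖ - ‖B1 p‖ ≤ dist (B1 x) (B1 p) := by
      rw [dist_eq_norm]; exact norm_sub_norm_le _ _
    have h4 : (LB1 : ℝ) * dist x p ≤ LB1 * ε := mul_le_mul_of_nonneg_left h2 (by positivity)
    rw [hC1def]; linarith
  set C2 : ℝ := ‖B2 p‖ + LB2 * ε with hC2def
  have hC20 : 0 ≤ C2 := by positivity
  have hC2 : ∀ x ∈ s, ‖B2 x‖ ≤ C2 := by
    intro x hx
    have h1 : dist (B2 x) (B2 p) ≤ LB2 * dist x p := hB2.dist_le_mul x (hs4 hx) p hp4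
    have h2 : dist x p ≤ ε := le_of_lt (mem_ball.mp hx.1)
    have h3 : ‖B2 x‖ - ‖B2 p‖ ≤ dist (B2 x) (B2 p) := by
      rw [dist_eq_norm]; exact norm_sub_norm_le _ _
    have h4 : (LB2 : ℝ) * dist x p ≤ LB2 * ε := mul_le_mul_of_nonneg_left h2 (by positivity)
    rw [hC2def]; linarith
  have hMbd : ∀ x ∈ S2, |M₁ x| ≤ 1 := by
    intro x hx
    obtain ⟨h1, h2⟩ := hM₁.mem_Icc x hx
    rw [abs_le]; constructor <;> linarith
  -- fst/snd Lipschitz pieces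
  have hk1 : ∀ x ∈ s, ∀ y ∈ s, dist (kfb x).1 (kfb y).1 ≤ Lk * dist x y := by
    intro x hx y hy
    have h1 : dist (kfb x).1 (kfb y).1 ≤ dist (kfb x) (kfb y) := by
      rw [Prod.dist_eq]; exact le_max_left _ _
    exact h1.trans (hk.dist_le_mul x (hs1 hx) y (hs1 hy))
  have hk2 : ∀ x ∈ s, ∀ y ∈ s, dist (kfb x).2 (kfb y).2 ≤ Lk * dist x y := by
    intro x hx y hy
    have h1 : dist (kfb x).2 (kfb y).2 ≤ dist (kfb x) (kfb y) := by
      rw [Prod.dist_eq]; exact le_max_right _ _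
    exact h1.trans (hk.dist_le_mul x (hs1 hx) y (hs1 hy))
  have hk1bd : ∀ x ∈ s, |(kfb x).1| ≤ Ck := fun x hx =>
    le_trans (by rw [← Real.norm_eq_abs]; exact norm_fst_le (kfb x)) (hCk x hx)
  have hk2bd : ∀ x ∈ s, |(kfb x).2| ≤ Ck := fun x hx =>
    le_trans (by rw [← Real.norm_eq_abs]; exact norm_snd_le (kfb x)) (hCk x hx)
  -- the product scalar g₁ = k₁ · M₁
  set g₁ : E3 → ℝ := fun x => (kfb x).1 * M₁ x with hg₁def
  set Lg₁ : ℝ := Ck * LM + Lk with hLg₁def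
  have hLg₁0 : 0 ≤ Lg₁ := by positivity
  have hg₁lip : ∀ x ∈ s, ∀ y ∈ s, dist (g₁ x) (g₁ y) ≤ Lg₁ * dist x y := by
    intro x hx y hy
    have h0 : dist (g₁ x) (g₁ y)
        ≤ |(kfb x).1| * dist (M₁ x) (M₁ y) + |(kfb x).1 - (kfb y).1| * ‖M₁ y‖ := by
      simpa [smul_eq_mul] using
        dist_smul_smul (F := ℝ) ((kfb x).1) ((kfb y).1) (M₁ x) (M₁ y)
    have h1 : |(kfb x).1| * dist (M₁ x) (M₁ y) ≤ Ck * (LM * dist x y) := by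
      apply mul_le_mul (hk1bd x hx) (hM.dist_le_mul x (hs2 hx) y (hs2 hy)) dist_nonneg hCk0
    have h2 : |(kfb x).1 - (kfb y).1| * ‖M₁ y‖ ≤ (Lk * dist x y) * 1 := by
      apply mul_le_mul _ _ (norm_nonneg _) (by positivity)
      · rw [← Real.dist_eq]; exact hk1 x hx y hy
      · rw [Real.norm_eq_abs]; exact hMbd y hy.2
    calc dist (g₁ x) (g₁ y) ≤ Ck * (LM * dist x y) + (Lk * dist x y) * 1 := by linarith
      _ = Lg₁ * dist x y := by rw [hLg₁def]; ring
  have hg₁bd : ∀ x ∈ s, |g₁ x| ≤ Ck := by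
    intro x hx
    rw [hg₁def, abs_mul]
    calc |(kfb x).1| * |M₁ x| ≤ Ck * 1 :=
          mul_le_mul (hk1bd x hx) (hMbd x hx.2) (abs_nonneg _) hCk0
      _ = Ck := mul_one _
  -- assemble
  refine ⟨ε, hεpos, Ck * LB1 + Lg₁ * C1 + (Ck * LB2 + Lk * C2), by positivity, ?_⟩
  intro x hx y hy
  have hFx : Fvf M₁ kfb x = g₁ x • B1 x + (kfb x).2 • B2 x := by
    rw [Fvf, A1, smul_smul, hg₁def]
  have hFy : Fvf M₁ kfb y = g₁ y • B1 y + (kfb y).2 • B2 y := by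
    rw [Fvf, A1, smul_smul, hg₁def]
  rw [hFx, hFy]
  have e0 : dist (g₁ x • B1 x + (kfb x).2 • B2 x) (g₁ y • B1 y + (kfb y).2 • B2 y)
      ≤ dist (g₁ x • B1 x) (g₁ y • B1 y) + dist ((kfb x).2 • B2 x) ((kfb y).2 • B2 y) :=
    dist_add_add_le_of_le le_rfl le_rfl
  have e1 : dist (g₁ x • B1 x) (g₁ y • B1 y)
      ≤ Ck * ((LB1 : ℝ) * dist x y) + (Lg₁ * dist x y) * C1 := by
    refine (dist_smul_smul _ _ _ _).trans ?_
    have h1 : |g₁ x| * dist (B1 x) (B1 y) ≤ Ck * ((LB1 : ℝ) * dist x y) :=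
      mul_le_mul (hg₁bd x hx) (hB1.dist_le_mul x (hs3 hx) y (hs3 hy)) dist_nonneg hCk0
    have h2 : |g₁ x - g₁ y| * ‖B1 y‖ ≤ (Lg₁ * dist x y) * C1 := by
      apply mul_le_mul _ (hC1 y hy) (norm_nonneg _) (by positivity)
      rw [← Real.dist_eq]; exact hg₁lip x hx y hy
    linarith
  have e2 : dist ((kfb x).2 • B2 x) ((kfb y).2 • B2 y)
      ≤ Ck * ((LB2 : ℝ) * dist x y) + ((Lk : ℝ) * dist x y) * C2 := by
    refine (dist_smul_smul _ _ _ _).trans ?_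
    have h1 : |(kfb x).2| * dist (B2 x) (B2 y) ≤ Ck * ((LB2 : ℝ) * dist x y) :=
      mul_le_mul (hk2bd x hx) (hB2.dist_le_mul x (hs4 hx) y (hs4 hy)) dist_nonneg hCk0
    have h2 : |(kfb x).2 - (kfb y).2| * ‖B2 y‖ ≤ ((Lk : ℝ) * dist x y) * C2 := by
      apply mul_le_mul _ (hC2 y hy) (norm_nonneg _) (by positivity)
      rw [← Real.dist_eq]; exact hk2 x hx y hy
    linarith
  calc dist (g₁ x • B1 x + (kfb x).2 • B2 x) (g₁ y • B1 y + (kfb y).2 • B2 y)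
      ≤ (Ck * ((LB1 : ℝ) * dist x y) + (Lg₁ * dist x y) * C1)
        + (Ck * ((LB2 : ℝ) * dist x y) + ((Lk : ℝ) * dist x y) * C2) := by linarith
    _ = (Ck * LB1 + Lg₁ * C1 + (Ck * LB2 + Lk * C2)) * dist x y := by ring


/-- The closed-loop field is continuous on the sphere. -/
lemma F_contOn {M₁ : E3 → ℝ} {kfb : E3 → ℝ × ℝ} (hM₁ : M1Hyp M₁)
    (hLip : ∀ x₀ ∈ S2, ∃ ε > (0 : ℝ), ∃ L : NNReal, LipschitzOnWith L kfb (ball x₀ ε ∩ S2)) :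
    ContinuousOn (Fvf M₁ kfb) S2 := by
  intro p hp
  obtain ⟨ε, hε, L, hL0, hF⟩ := F_loc_lip hM₁ hLip hp
  rw [Metric.continuousWithinAt_iff]
  intro δ hδ
  refine ⟨min ε (δ / (L + 1)), by positivity, ?_⟩
  intro y hy hdy
  have hys : y ∈ ball p ε ∩ S2 :=
    ⟨mem_ball.mpr (lt_of_lt_of_le hdy (min_le_left _ _)), hy⟩
  have hps : p ∈ ball p ε ∩ S2 := ⟨mem_ball_self hε, hp⟩
  have h1 := hF y hys p hps
  have h2 : L * dist y p ≤ L * (δ / (L + 1)) :=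
    mul_le_mul_of_nonneg_left (le_of_lt (lt_of_lt_of_le hdy (min_le_right _ _))) hL0
  have h3 : L * (δ / (L + 1)) < δ := by
    have hpos : (0:ℝ) < L + 1 := by linarith
    calc L * (δ / (L + 1)) = δ * (L / (L + 1)) := by ring
      _ < δ * 1 := by
          apply mul_lt_mul_of_pos_left _ hδ
          exact (div_lt_one hpos).mpr (by linarith)
      _ = δ := mul_one _
  calc dist (Fvf M₁ kfb y) (Fvf M₁ kfb p) ≤ L * dist y p := h1
    _ ≤ L * (δ / (L + 1)) := h2
    _ < δ := h3

/-- A single Lipschitz constant for the closed-loop field on all of `S²`. -/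
lemma F_glob_lip {M₁ : E3 → ℝ} {kfb : E3 → ℝ × ℝ} (hM₁ : M1Hyp M₁)
    (hLip : ∀ x₀ ∈ S2, ∃ ε > (0 : ℝ), ∃ L : NNReal, LipschitzOnWith L kfb (ball x₀ ε ∩ S2)) :
    ∃ K : NNReal, LipschitzOnWith K (Fvf M₁ kfb) S2 := by
  have hloc : ∀ p ∈ S2, ∃ ε > (0:ℝ), ∃ L : ℝ, 0 ≤ L ∧ ∀ x ∈ ball p ε ∩ S2,
      ∀ y ∈ ball p ε ∩ S2, dist (Fvf M₁ kfb x) (Fvf M₁ kfb y) ≤ L * dist x y :=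
    fun p hp => F_loc_lip hM₁ hLip hp
  choose! ε hε L hL0 hLp using hloc
  obtain ⟨C, hC⟩ := (isCompact_sphere (0:E3) 1).exists_bound_of_continuousOn
    (F_contOn hM₁ hLip)
  have hC0 : 0 ≤ C := le_trans (norm_nonneg _) (hC qv qv_mem)
  have hcover : S2 ⊆ ⋃ p ∈ S2, ball p (ε p / 2) := fun x hx =>
    mem_biUnion hx (mem_ball_self (half_pos (hε x hx)))
  obtain ⟨b, hbS, hbfin, hbcov⟩ := (isCompact_sphere (0:E3) 1).elim_finite_subcover_image
    (fun p _ => isOpen_ball) hcover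
  have hbne : b.Nonempty := by
    rcases mem_iUnion₂.mp (hbcov qv_mem) with ⟨p, hp, _⟩
    exact ⟨p, hp⟩
  set Fb := hbfin.toFinset with hFbdef
  have hFbne : Fb.Nonempty := by
    rcases hbne with ⟨p, hp⟩
    exact ⟨p, hbfin.mem_toFinset.mpr hp⟩
  set r : ℝ := Fb.inf' hFbne (fun p => ε p / 2) with hrdef
  have hr0 : 0 < r := by
    rw [hrdef, Finset.lt_inf'_iff]
    intro p hp
    exact half_pos (hε p (hbS (hbfin.mem_toFinset.mp hp)))
  set Lmax : ℝ := Fb.sup' hFbne L with hLmaxdef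
  set K0 : ℝ := max Lmax (2 * C / r) with hK0def
  have hK00 : 0 ≤ K0 := le_trans (by positivity) (le_max_right _ _)
  refine ⟨Real.toNNReal K0, LipschitzOnWith.of_dist_le_mul ?_⟩
  intro x hx y hy
  rw [Real.coe_toNNReal _ hK00]
  by_cases hd : dist x y < r
  · rcases mem_iUnion₂.mp (hbcov hx) with ⟨p, hpb, hxp⟩
    have hpS : p ∈ S2 := hbS hpb
    have hpFb : p ∈ Fb := hbfin.mem_toFinset.mpr hpb
    have hrle : r ≤ ε p / 2 := Finset.inf'_le _ hpFb
    have hxball : x ∈ ball p (ε p) :=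
      mem_ball.mpr (lt_of_lt_of_le (mem_ball.mp hxp) (by linarith))
    have hyball : y ∈ ball p (ε p) := by
      rw [mem_ball]
      calc dist y p ≤ dist y x + dist x p := dist_triangle _ _ _
        _ < r + ε p / 2 := by
            rw [dist_comm y x]
            exact add_lt_add (lt_of_lt_of_le hd le_rfl) (mem_ball.mp hxp)
        _ ≤ ε p := by linarith
    have h1 := hLp p hpS x ⟨hxball, hx⟩ y ⟨hyball, hy⟩
    have h2 : L p ≤ Lmax := Finset.le_sup' _ hpFb
    calc dist (Fvf M₁ kfb x) (Fvf M₁ kfb y) ≤ L p * dist x y := h1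
      _ ≤ Lmax * dist x y := mul_le_mul_of_nonneg_right h2 dist_nonneg
      _ ≤ K0 * dist x y := mul_le_mul_of_nonneg_right (le_max_left _ _) dist_nonneg
  · push_neg at hd
    have h1 : dist (Fvf M₁ kfb x) (Fvf M₁ kfb y) ≤ 2 * C := by
      rw [dist_eq_norm]
      calc ‖Fvf M₁ kfb x - Fvf M₁ kfb y‖ ≤ ‖Fvf M₁ kfb x‖ + ‖Fvf M₁ kfb y‖ := norm_sub_le _ _
        _ ≤ C + C := add_le_add (hC x hx) (hC y hy)
        _ = 2 * C := by ring
    have h2 : 2 * C ≤ (2 * C / r) * dist x y := by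
      rw [div_mul_eq_mul_div, le_div_iff₀ hr0]
      exact mul_le_mul_of_nonneg_left hd (by positivity)
    calc dist (Fvf M₁ kfb x) (Fvf M₁ kfb y) ≤ (2 * C / r) * dist x y := le_trans h1 h2
      _ ≤ K0 * dist x y := mul_le_mul_of_nonneg_right (le_max_right _ _) dist_nonneg

/-- Grönwall continuous dependence for closed-loop solutions. -/
lemma gronwall {M₁ : E3 → ℝ} {kfb : E3 → ℝ × ℝ} {K : NNReal}
    (hK : LipschitzOnWith K (Fvf M₁ kfb) S2)
    {x y : ℝ → E3} (hx : ClosedLoopSol M₁ kfb x) (hy : ClosedLoopSol M₁ kfb y)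
    {t : ℝ} (ht : 0 ≤ t) :
    dist (x t) (y t) ≤ dist (x 0) (y 0) * Real.exp (K * t) := by
  have h := dist_le_of_trajectories_ODE_of_mem (v := fun _ z => Fvf M₁ kfb z)
    (s := fun _ => S2) (K := K) (a := 0) (b := t) (fun _ _ => hK)
    ((sol_cont hx).mono (Icc_subset_Ici_self))
    (fun τ hτ => (sol_deriv hx hτ.1).mono (Ici_subset_Ici.mpr hτ.1))
    (fun τ hτ => hx.1 τ hτ.1)
    ((sol_cont hy).mono (Icc_subset_Ici_self))
    (fun τ hτ => (sol_deriv hy hτ.1).mono (Ici_subset_Ici.mpr hτ.1))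
    (fun τ hτ => hy.1 τ hτ.1)
    (le_refl (dist (x 0) (y 0)))
  have h2 := h t ⟨ht, le_rfl⟩
  simpa using h2

/-- Trapping near one pole: a solution that stays within distance 1 of the
attractor and starts near the pole `a` converges to `a`. -/
lemma trap {M₁ : E3 → ℝ} {kfb : E3 → ℝ × ℝ} {x : ℝ → E3}
    (hsol : ClosedLoopSol M₁ kfb x)
    {a b : E3} (hab : dist a b = 2)
    (hset : ∀ z, Metric.infDist z attrA = min (dist z a) (dist z b))
    (hst1 : ∀ t, 0 ≤ t → Metric.infDist (x t) attrA < 1)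
    (hconv : Filter.Tendsto (fun t => Metric.infDist (x t) attrA) Filter.atTop (nhds 0))
    (h0 : dist (x 0) a < 1) :
    Filter.Tendsto x Filter.atTop (nhds a) := by
  have himg : IsPreconnected (x '' Ici 0) := (isPreconnected_Ici).image x (sol_cont hsol)
  have hsub : x '' Ici 0 ⊆ ball a 1 ∪ ball b 1 := by
    rintro _ ⟨t, ht, rfl⟩
    have h1 := hst1 t ht
    rw [hset] at h1
    rcases min_lt_iff.mp h1 with h | h
    · exact Set.mem_union_left _ (mem_ball.mpr h)
    · exact Set.mem_union_right _ (mem_ball.mpr h)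
  have hdisj : Disjoint (ball a 1) (ball b 1) := by
    rw [Set.disjoint_left]
    intro z hz1 hz2
    rw [mem_ball] at hz1 hz2
    have h := dist_triangle a z b
    rw [hab, dist_comm a z] at h
    linarith
  have hne : (x '' Ici 0 ∩ ball a 1).Nonempty :=
    ⟨x 0, ⟨0, mem_Ici.mpr le_rfl, rfl⟩, mem_ball.mpr h0⟩
  have hall := himg.subset_left_of_subset_union isOpen_ball isOpen_ball hdisj hsub hne
  have hda : ∀ t, 0 ≤ t → dist (x t) a < 1 := fun t ht =>
    mem_ball.mp (hall ⟨t, mem_Ici.mpr ht, rfl⟩)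
  have heq : ∀ t, 0 ≤ t → Metric.infDist (x t) attrA = dist (x t) a := by
    intro t ht
    rw [hset]
    apply min_eq_left
    have h1 := hda t ht
    have h2 : (2:ℝ) ≤ dist (x t) a + dist (x t) b := by
      have h := dist_triangle a (x t) b
      rw [hab, dist_comm a (x t)] at h
      linarith
    linarith
  rw [tendsto_iff_dist_tendsto_zero]
  apply hconv.congr'
  filter_upwards [Filter.eventually_ge_atTop (0:ℝ)] with t ht
  exact heq t ht

end SphereNoFB

/-- **No locally Lipschitz stabilizing feedback.**  The sphere system
`ẋ = A₁(x)u₁ + A₂(x)u₂` admits no locally Lipschitz feedback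
`k = (k₁,k₂) : S² → ℝ²` making the closed-loop system globally asymptotically
stable to `A = {q, -q}` (Lyapunov stability plus global attraction, with every
maximal closed-loop solution defined for all `t ≥ 0`). -/
theorem sphere_no_lipschitz_feedback (M₁ : E3 → ℝ) (hM₁ : M1Hyp M₁) :
    ¬ ∃ kfb : E3 → ℝ × ℝ,
      -- `k` is locally Lipschitz on `S²`:
      (∀ x₀ ∈ S2, ∃ ε > (0 : ℝ), ∃ L : NNReal,
        LipschitzOnWith L kfb (ball x₀ ε ∩ S2)) ∧
      -- Lyapunov stability of `A`:
      (∀ ε > (0 : ℝ), ∃ δ > (0 : ℝ), ∀ x : ℝ → E3, ClosedLoopSol M₁ kfb x →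
        infDist (x 0) attrA < δ → ∀ t, 0 ≤ t → infDist (x t) attrA < ε) ∧
      -- global existence of closed-loop solutions:
      (∀ ξ ∈ S2, ∃ x : ℝ → E3, ClosedLoopSol M₁ kfb x ∧ x 0 = ξ) ∧
      -- global attraction to `A`:
      (∀ x : ℝ → E3, ClosedLoopSol M₁ kfb x →
        Tendsto (fun t => infDist (x t) attrA) atTop (nhds 0)) := by
  rintro ⟨kfb, hLip, hStab, hExist, hAttr⟩
  obtain ⟨K, hK⟩ := SphereNoFB.F_glob_lip hM₁ hLip
  obtain ⟨δ₁, hδ₁pos, hδ₁⟩ := hStab 1 one_pos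
  set δ : ℝ := min δ₁ 1 with hδdef
  have hδpos : 0 < δ := lt_min hδ₁pos one_pos
  have hδle1 : δ ≤ 1 := min_le_right _ _
  have hδleδ₁ : δ ≤ δ₁ := min_le_left _ _
  have hq : qv ∈ attrA := Set.mem_insert _ _
  have hnq : -qv ∈ attrA := Set.mem_insert_of_mem _ rfl
  -- Key: a solution that is δ-close to a pole at some time `T ≥ 0` converges to it.
  have key : ∀ (x : ℝ → E3), ClosedLoopSol M₁ kfb x → ∀ T, 0 ≤ T →
      ∀ pole, pole ∈ attrA → dist (x T) pole < δ →
      Filter.Tendsto x Filter.atTop (nhds pole) := by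
    intro x hx T hT pole hpole hdd
    set y : ℝ → E3 := fun s => x (T + s) with hydef
    have hy : ClosedLoopSol M₁ kfb y := SphereNoFB.sol_shift hx hT
    have hy0 : y 0 = x T := by rw [hydef]; simp
    have hinf0 : Metric.infDist (y 0) attrA < δ₁ := by
      calc Metric.infDist (y 0) attrA ≤ dist (y 0) pole := Metric.infDist_le_dist_of_mem hpole
        _ = dist (x T) pole := by rw [hy0]
        _ < δ := hdd
        _ ≤ δ₁ := hδleδ₁
    have hst1 : ∀ t, 0 ≤ t → Metric.infDist (y t) attrA < 1 := hδ₁ y hy hinf0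
    have hconv := hAttr y hy
    have hy0d : dist (y 0) pole < 1 := by
      rw [hy0]; exact lt_of_lt_of_le hdd hδle1
    have hcase : pole = qv ∨ pole = -qv := by simpa [attrA] using hpole
    have hytend : Filter.Tendsto y Filter.atTop (nhds pole) := by
      rcases hcase with rfl | rfl
      · exact SphereNoFB.trap hy SphereNoFB.dist_qv_negqv
          (fun z => SphereNoFB.infDist_attrA z) hst1 hconv hy0d
      · refine SphereNoFB.trap (b := qv) hy ?_ ?_ hst1 hconv hy0d
        · rw [dist_comm]; exact SphereNoFB.dist_qv_negqv
        · intro z; rw [SphereNoFB.infDist_attrA]; exact min_comm _ _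
    have hshift : Filter.Tendsto (fun t : ℝ => t + -T) Filter.atTop Filter.atTop :=
      Filter.tendsto_atTop_add_const_right _ _ Filter.tendsto_id
    refine (hytend.comp hshift).congr fun t => ?_
    show x (T + (t + -T)) = x t
    rw [show T + (t + -T) = t by ring]
  -- Uniqueness of solutions with the same initial condition.
  have uniq : ∀ x y, ClosedLoopSol M₁ kfb x → ClosedLoopSol M₁ kfb y → x 0 = y 0 →
      ∀ t, 0 ≤ t → x t = y t := by
    intro x y hx hy h0 t ht
    have h := SphereNoFB.gronwall hK hx hy ht
    rw [h0, dist_self, zero_mul] at h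
    exact dist_le_zero.mp h
  -- The two basins.
  set Bq : Set E3 := {ξ | ξ ∈ S2 ∧ ∃ x : ℝ → E3, ClosedLoopSol M₁ kfb x ∧ x 0 = ξ ∧
    Filter.Tendsto x Filter.atTop (nhds qv)} with hBqdef
  set Bn : Set E3 := {ξ | ξ ∈ S2 ∧ ∃ x : ℝ → E3, ClosedLoopSol M₁ kfb x ∧ x 0 = ξ ∧
    Filter.Tendsto x Filter.atTop (nhds (-qv))} with hBndef
  -- Relative openness of a basin.
  have open_basin : ∀ pole, pole ∈ attrA → ∀ ξ, ∀ x : ℝ → E3, ClosedLoopSol M₁ kfb x →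
      x 0 = ξ → Filter.Tendsto x Filter.atTop (nhds pole) →
      ∃ ρ > (0:ℝ), ∀ ξ' ∈ ball ξ ρ ∩ S2,
        ∃ y : ℝ → E3, ClosedLoopSol M₁ kfb y ∧ y 0 = ξ' ∧
          Filter.Tendsto y Filter.atTop (nhds pole) := by
    intro pole hpole ξ x hx hx0 hxt
    have hdist := tendsto_iff_dist_tendsto_zero.mp hxt
    have hev : ∀ᶠ t in Filter.atTop, dist (x t) pole < δ/2 :=
      hdist.eventually_lt_const (by positivity)
    obtain ⟨T, hTd, hT0⟩ := (hev.and (Filter.eventually_ge_atTop 0)).exists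
    refine ⟨(δ/2) / Real.exp (K * T), by positivity, ?_⟩
    intro ξ' hξ'
    obtain ⟨y, hy, hy0⟩ := hExist ξ' hξ'.2
    have h1 : dist (y T) (x T) < δ/2 := by
      calc dist (y T) (x T) ≤ dist (y 0) (x 0) * Real.exp (K * T) :=
            SphereNoFB.gronwall hK hy hx hT0
        _ < ((δ/2)/Real.exp (K*T)) * Real.exp (K*T) := by
            apply mul_lt_mul_of_pos_right _ (Real.exp_pos _)
            rw [hy0, hx0]; exact mem_ball.mp hξ'.1
        _ = δ/2 := div_mul_cancel₀ _ (ne_of_gt (Real.exp_pos _))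
    have h2 : dist (y T) pole < δ := by
      calc dist (y T) pole ≤ dist (y T) (x T) + dist (x T) pole := dist_triangle _ _ _
        _ < δ/2 + δ/2 := add_lt_add h1 hTd
        _ = δ := by ring
    exact ⟨y, hy, hy0, key y hy T hT0 pole hpole h2⟩
  -- Classification: every point of `S²` lies in one of the two basins.
  have classify : ∀ ξ ∈ S2, ξ ∈ Bq ∪ Bn := by
    intro ξ hξ
    obtain ⟨x, hx, hx0⟩ := hExist ξ hξ
    have hconv := hAttr x hx
    have hev : ∀ᶠ t in Filter.atTop, Metric.infDist (x t) attrA < δ :=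
      hconv.eventually_lt_const hδpos
    obtain ⟨T, hTd, hT0⟩ := (hev.and (Filter.eventually_ge_atTop 0)).exists
    obtain ⟨z, hz, hzd⟩ := (Metric.infDist_lt_iff ⟨qv, hq⟩).mp hTd
    have hken := key x hx T hT0 z hz hzd
    have hzc : z = qv ∨ z = -qv := by simpa [attrA] using hz
    rcases hzc with rfl | rfl
    · exact Set.mem_union_left _ ⟨hξ, x, hx, hx0, hken⟩
    · exact Set.mem_union_right _ ⟨hξ, x, hx, hx0, hken⟩
  -- The basins are disjoint.
  have hdisjB : ∀ ξ, ¬(ξ ∈ Bq ∧ ξ ∈ Bn) := by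
    rintro ξ ⟨⟨hξS, x, hx, hx0, hxt⟩, ⟨_, y, hy, hy0, hyt⟩⟩
    have heq := uniq x y hx hy (by rw [hx0, hy0])
    have hyq : Filter.Tendsto y Filter.atTop (nhds qv) := by
      apply hxt.congr'
      filter_upwards [Filter.eventually_ge_atTop (0:ℝ)] with t ht
      exact heq t ht
    exact SphereNoFB.qv_ne_negqv (tendsto_nhds_unique hyq hyt)
  -- Openness data for the basins.
  have openq : ∀ ξ ∈ Bq, ∃ ρ > (0:ℝ), ∀ ξ' ∈ ball ξ ρ ∩ S2, ξ' ∈ Bq := by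
    rintro ξ ⟨hξS, x, hx, hx0, hxt⟩
    obtain ⟨ρ, hρ, h⟩ := open_basin qv hq ξ x hx hx0 hxt
    exact ⟨ρ, hρ, fun ξ' hξ' => ⟨hξ'.2, h ξ' hξ'⟩⟩
  have openn : ∀ ξ ∈ Bn, ∃ ρ > (0:ℝ), ∀ ξ' ∈ ball ξ ρ ∩ S2, ξ' ∈ Bn := by
    rintro ξ ⟨hξS, x, hx, hx0, hxt⟩
    obtain ⟨ρ, hρ, h⟩ := open_basin (-qv) hnq ξ x hx hx0 hxt
    exact ⟨ρ, hρ, fun ξ' hξ' => ⟨hξ'.2, h ξ' hξ'⟩⟩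
  choose! ρq hρq hsubq using openq
  choose! ρn hρn hsubn using openn
  set U : Set E3 := ⋃ ξ ∈ Bq, ball ξ (ρq ξ) with hUdef
  set V : Set E3 := ⋃ ξ ∈ Bn, ball ξ (ρn ξ) with hVdef
  have hUopen : IsOpen U := isOpen_biUnion fun _ _ => isOpen_ball
  have hVopen : IsOpen V := isOpen_biUnion fun _ _ => isOpen_ball
  -- The sphere is preconnected.
  have hrank : 1 < Module.rank ℝ E3 := by
    rw [← Module.finrank_eq_rank, finrank_euclideanSpace_fin]
    norm_num
  have hconn : IsPreconnected S2 :=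
    (isConnected_sphere hrank 0 zero_le_one).isPreconnected
  have hcov : S2 ⊆ U ∪ V := by
    intro ξ hξ
    rcases classify ξ hξ with h | h
    · exact Set.mem_union_left _ (Set.mem_biUnion h (mem_ball_self (hρq ξ h)))
    · exact Set.mem_union_right _ (Set.mem_biUnion h (mem_ball_self (hρn ξ h)))
  have hqBq : qv ∈ Bq :=
    ⟨SphereNoFB.qv_mem, fun _ => qv,
      SphereNoFB.const_sol SphereNoFB.qv_mem (SphereNoFB.Fvf_qv M₁ kfb), rfl,
      tendsto_const_nhds⟩
  have hnBn : -qv ∈ Bn :=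
    ⟨SphereNoFB.negqv_mem, fun _ => -qv,
      SphereNoFB.const_sol SphereNoFB.negqv_mem (SphereNoFB.Fvf_negqv M₁ kfb), rfl,
      tendsto_const_nhds⟩
  have hUne : (S2 ∩ U).Nonempty :=
    ⟨qv, SphereNoFB.qv_mem, Set.mem_biUnion hqBq (mem_ball_self (hρq qv hqBq))⟩
  have hVne : (S2 ∩ V).Nonempty :=
    ⟨-qv, SphereNoFB.negqv_mem, Set.mem_biUnion hnBn (mem_ball_self (hρn (-qv) hnBn))⟩
  obtain ⟨z, hzS, hzU, hzV⟩ := hconn U V hUopen hVopen hcov hUne hVne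
  have hzBq : z ∈ Bq := by
    rcases Set.mem_iUnion₂.mp hzU with ⟨ξ, hξ, hzb⟩
    exact hsubq ξ hξ z ⟨hzb, hzS⟩
  have hzBn : z ∈ Bn := by
    rcases Set.mem_iUnion₂.mp hzV with ⟨ξ, hξ, hzb⟩
    exact hsubn ξ hξ z ⟨hzb, hzS⟩
  exact hdisjB z ⟨hzBq, hzBn⟩
end
end

section
/- Along any classical closed-loop trajectory x(t) of ẋ = A₁(x)u₁ + A₂(x)u₂ with the feedback K(x) = (1,0) if x₃ ≥ 0 and M₁(x) = 1, K(x) = (−1,0) if x₃ < 0 and M₁(x) = 1, K(x) = (0,1) if M₁(x) < 1, the following decay holds at every point where x₂ ≠ 0, x₃ ≠ 0, M₁(x) = 1 and x ∉ {±q}: d/dt V(x(t)) ≤ −√(1 − (x(t)·q)²); moreover along closed-loop trajectories in {x₂ = 0, x₃ ≠ 0} one has d/dt V(x(t)) = −(1 + π/2)√(1 − x₃(t)²), and every closed-loop trajectory x(t) starting in M₁⁻¹(1) satisfies V(x(t)) − V(x(0)) ≤ −∫₀ᵗ √(1 − x₃(s)²) ds. -/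
open Set MeasureTheory Metric Filter Manifold

noncomputable section
open scoped Classical

/-- The discontinuous stabilizing feedback `K`. -/
def Kfb (M₁ : E3 → ℝ) (x : E3) : ℝ × ℝ :=
  if M₁ x = 1 then (if 0 ≤ x 2 then (1, 0) else (-1, 0)) else (0, 1)

/-! auxiliary -/

lemma qv_zero : qv 0 = 0 := by simp [qv, EuclideanSpace.single_apply]
lemma qv_one : qv 1 = 0 := by simp [qv, EuclideanSpace.single_apply]
lemma qv_two : qv 2 = 1 := by simp [qv, EuclideanSpace.single_apply]

lemma inner_qv (x : E3) : (inner ℝ x qv : ℝ) = x 2 := by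
  simp [qv, EuclideanSpace.inner_single_right]
lemma inner_rv (x : E3) : (inner ℝ x rv : ℝ) = x 1 := by
  simp [rv, EuclideanSpace.inner_single_right]

lemma arccos_antitone {x y : ℝ} (h : x ≤ y) : Real.arccos y ≤ Real.arccos x := by
  simp only [Real.arccos_eq_pi_div_two_sub_arcsin]
  have := Real.monotone_arcsin h
  linarith

lemma Vq_eq (x : E3) : Vq x = Real.arccos |x 2| := by
  have h1 : geo x qv = Real.arccos (x 2) := by rw [geo, inner_qv]
  have h2 : geo x (-qv) = Real.arccos (-(x 2)) := by
    rw [geo, inner_neg_right, inner_qv]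
  rcases le_or_gt 0 (x 2) with h | h
  · rw [Vq, h1, h2, abs_of_nonneg h, min_eq_left (arccos_antitone (by linarith))]
  · rw [Vq, h1, h2, abs_of_neg h, min_eq_right (arccos_antitone (by linarith))]

lemma Vr_eq (x : E3) : Vr x = Real.arccos (-|x 1|) := by
  have h1 : geo x rv = Real.arccos (x 1) := by rw [geo, inner_rv]
  have h2 : geo x (-rv) = Real.arccos (-(x 1)) := by
    rw [geo, inner_neg_right, inner_rv]
  rcases le_or_gt 0 (x 1) with h | h
  · rw [Vr, h1, h2, abs_of_nonneg h, max_eq_right (arccos_antitone (by linarith))]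
  · rw [Vr, h1, h2, abs_of_neg h, max_eq_left (arccos_antitone (by linarith)), neg_neg]

lemma S2_sum {y : E3} (h : y ∈ S2) : (y 0)^2 + (y 1)^2 + (y 2)^2 = 1 := by
  have hn : ‖y‖ = 1 := by
    have : dist y 0 = 1 := h
    rwa [dist_zero_right] at this
  have h1 := EuclideanSpace.norm_eq y
  rw [hn] at h1
  have h2 : ∑ i, ‖y i‖ ^ 2 = 1 := Real.sqrt_eq_one.mp h1.symm
  simp only [Real.norm_eq_abs, sq_abs, Fin.sum_univ_three] at h2
  linarith

lemma S2_sq_le {y : E3} (h : y ∈ S2) (i : Fin 3) : (y i)^2 ≤ 1 := by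
  have := S2_sum h
  have h0 := sq_nonneg (y 0); have h1 := sq_nonneg (y 1); have h2 := sq_nonneg (y 2)
  fin_cases i
  · show (y 0)^2 ≤ 1; nlinarith
  · show (y 1)^2 ≤ 1; nlinarith
  · show (y 2)^2 ≤ 1; nlinarith

lemma S2_abs_le {y : E3} (h : y ∈ S2) (i : Fin 3) : |y i| ≤ 1 := by
  nlinarith [sq_abs (y i), S2_sq_le h i, abs_nonneg (y i)]

lemma B1_apply (x : E3) (i : Fin 3) : B1 x i = qv i - x 2 * x i := by
  rw [B1, inner_qv]; rfl

lemma B2_zero (x : E3) : B2 x 0 = x 1 := by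
  simp [B2, cross3, cross_apply, qv, EuclideanSpace.single_apply,
    WithLp.equiv_apply, WithLp.equiv_symm_apply]
lemma B2_one (x : E3) : B2 x 1 = -(x 0) := by
  simp [B2, cross3, cross_apply, qv, EuclideanSpace.single_apply,
    WithLp.equiv_apply, WithLp.equiv_symm_apply]
lemma B2_two (x : E3) : B2 x 2 = 0 := by
  simp [B2, cross3, cross_apply, qv, EuclideanSpace.single_apply,
    WithLp.equiv_apply, WithLp.equiv_symm_apply]

/-- the sign used by the feedback -/
def eps (y : E3) : ℝ := if 0 ≤ y 2 then 1 else -1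

lemma eps_cases (y : E3) : eps y = 1 ∨ eps y = -1 := by
  unfold eps; split_ifs <;> simp
lemma eps_mul (y : E3) : eps y * y 2 = |y 2| := by
  unfold eps; split_ifs with h
  · rw [abs_of_nonneg h]; ring
  · rw [abs_of_neg (lt_of_not_ge h)]; ring
lemma eps_sq (y : E3) : eps y * eps y = 1 := by
  rcases eps_cases y with h | h <;> rw [h] <;> norm_num

lemma Kfb_one {M₁ : E3 → ℝ} {y : E3} (h : M₁ y = 1) : Kfb M₁ y = (eps y, 0) := by
  unfold Kfb eps; rw [if_pos h]; split_ifs <;> rfl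
lemma Kfb_not {M₁ : E3 → ℝ} {y : E3} (h : M₁ y ≠ 1) : Kfb M₁ y = (0, 1) := by
  unfold Kfb; rw [if_neg h]

/-- closed-loop vector field component -/
def Dc (M₁ : E3 → ℝ) (x : ℝ → E3) (i : Fin 3) (t : ℝ) : ℝ :=
  ((Kfb M₁ (x t)).1 • A1 M₁ (x t) + (Kfb M₁ (x t)).2 • B2 (x t)) i

lemma hDc {M₁ : E3 → ℝ} {x : ℝ → E3} (hx : ClosedLoopSol M₁ (Kfb M₁) x)
    (i : Fin 3) {t : ℝ} (ht : 0 ≤ t) :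
    HasDerivWithinAt (fun s => x s i) (Dc M₁ x i t) (Ici 0) t := by
  have h := hx.2 t ht
  have := (EuclideanSpace.proj i (𝕜 := ℝ)).hasFDerivAt.comp_hasDerivWithinAt t h
  exact this

lemma Dc_apply {M₁ : E3 → ℝ} {x : ℝ → E3} (i : Fin 3) (t : ℝ) :
    Dc M₁ x i t = (Kfb M₁ (x t)).1 * (M₁ (x t) * (qv i - x t 2 * x t i))
      + (Kfb M₁ (x t)).2 * B2 (x t) i := by
  simp [Dc, A1, PiLp.add_apply, PiLp.smul_apply, smul_eq_mul, B1_apply]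

lemma Dc_two_one {M₁ : E3 → ℝ} {x : ℝ → E3} {t : ℝ} (h : M₁ (x t) = 1) :
    Dc M₁ x 2 t = eps (x t) * (1 - (x t 2)^2) := by
  rw [Dc_apply, Kfb_one h, h, qv_two, B2_two]; ring
lemma Dc_one_one {M₁ : E3 → ℝ} {x : ℝ → E3} {t : ℝ} (h : M₁ (x t) = 1) :
    Dc M₁ x 1 t = eps (x t) * (-(x t 2 * x t 1)) := by
  rw [Dc_apply, Kfb_one h, h, qv_one]; ring
lemma Dc_two_not {M₁ : E3 → ℝ} {x : ℝ → E3} {t : ℝ} (h : M₁ (x t) ≠ 1) :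
    Dc M₁ x 2 t = 0 := by
  rw [Dc_apply, Kfb_not h, B2_two]; ring

/-! trajectory lemmas -/
open scoped Topology

section Traj
variable {M₁ : E3 → ℝ} {x : ℝ → E3}

lemma xcont (hx : ClosedLoopSol M₁ (Kfb M₁) x) : ContinuousOn x (Ici 0) :=
  fun t ht => (hx.2 t ht).continuousWithinAt

lemma xhat_cont (hx : ClosedLoopSol M₁ (Kfb M₁) x) : Continuous (fun s => x (max s 0)) :=
  (xcont hx).comp_continuous (continuous_id.max continuous_const) (fun s => Set.mem_Ici.mpr (le_max_right _ _))

lemma xhat2_cont (hx : ClosedLoopSol M₁ (Kfb M₁) x) : Continuous (fun s => x (max s 0) 2) :=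
  (EuclideanSpace.proj (2 : Fin 3) (𝕜 := ℝ)).continuous.comp (xhat_cont hx)

lemma phi_contOn (hx : ClosedLoopSol M₁ (Kfb M₁) x) : ContinuousOn (fun s => x s 2) (Ici 0) :=
  fun t ht => (hDc hx 2 ht).continuousWithinAt

lemma w_deriv (hx : ClosedLoopSol M₁ (Kfb M₁) x) {t : ℝ} (ht : 0 ≤ t) :
    HasDerivWithinAt (fun s => (x s 2)^2) (2 * x t 2 * Dc M₁ x 2 t) (Ici 0) t := by
  have h := (hDc hx 2 ht).pow 2
  refine h.congr_deriv ?_; push_cast; ring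

lemma w_deriv_nonneg (hx : ClosedLoopSol M₁ (Kfb M₁) x) {t : ℝ} (ht : 0 ≤ t) :
    0 ≤ 2 * x t 2 * Dc M₁ x 2 t := by
  by_cases h : M₁ (x t) = 1
  · rw [Dc_two_one h]
    have h1 := eps_mul (x t)
    have h2 : (x t 2)^2 ≤ 1 := S2_sq_le (hx.1 t ht) 2
    have key : 2 * x t 2 * (eps (x t) * (1 - (x t 2)^2))
        = 2 * |x t 2| * (1 - (x t 2)^2) := by rw [← h1]; ring
    rw [key]
    have := abs_nonneg (x t 2)
    nlinarith
  · rw [Dc_two_not h]; ring_nf; exact le_refl 0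

lemma w_mono (hx : ClosedLoopSol M₁ (Kfb M₁) x) :
    MonotoneOn (fun s => (x s 2)^2) (Ici 0) := by
  apply monotoneOn_of_deriv_nonneg (convex_Ici 0)
  · exact fun t ht => ((hDc hx 2 ht).continuousWithinAt).pow 2
  · intro t ht; rw [interior_Ici] at ht
    exact (((hDc hx 2 ht.le).hasDerivAt (Ici_mem_nhds ht)).pow 2).differentiableAt.differentiableWithinAt
  · intro t ht; rw [interior_Ici] at ht
    have hd : HasDerivAt (fun s => (x s 2)^2) (2 * x t 2 * Dc M₁ x 2 t) t := by
      have h := ((hDc hx 2 ht.le).hasDerivAt (Ici_mem_nhds ht)).pow 2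
      refine h.congr_deriv ?_; push_cast; ring
    rw [hd.deriv]
    exact w_deriv_nonneg hx ht.le

lemma phi_ne (hx : ClosedLoopSol M₁ (Kfb M₁) x) (hall : ∀ t, 0 ≤ t → M₁ (x t) = 1) :
    ∀ t, 0 < t → x t 2 ≠ 0 := by
  intro t ht hzero
  have hwt : (x t 2)^2 = 0 := by rw [hzero]; ring
  have hmono := w_mono hx
  have hzero_on : ∀ u, 0 ≤ u → u ≤ t → x u 2 = 0 := by
    intro u h1 h2
    have h3 : (x u 2)^2 ≤ (x t 2)^2 := hmono h1 (le_of_lt ht : (0:ℝ) ≤ t) h2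
    rw [hwt] at h3
    exact sq_eq_zero_iff.mp (le_antisymm h3 (sq_nonneg _))
  set s := t/2 with hs
  have hspos : 0 < s := by positivity
  have hφs : x s 2 = 0 := hzero_on s hspos.le (by rw [hs]; linarith)
  have hd := hDc hx 2 hspos.le
  rw [Dc_two_one (hall s hspos.le)] at hd
  have heps : eps (x s) = 1 := by unfold eps; rw [if_pos (by rw [hφs])]
  rw [hφs, heps] at hd
  have hd1 : HasDerivAt (fun u => x u 2) 1 s := by
    have := hd.hasDerivAt (Ici_mem_nhds hspos); simpa using this
  have hd0 : HasDerivAt (fun u => x u 2) 0 s := by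
    refine (hasDerivAt_const s 0).congr_of_eventuallyEq ?_
    filter_upwards [Ioo_mem_nhds hspos (by rw [hs]; linarith : s < t)] with u hu
    exact hzero_on u hu.1.le hu.2.le
  exact one_ne_zero (hd1.unique hd0)

lemma sigma_ex (hx : ClosedLoopSol M₁ (Kfb M₁) x) (hall : ∀ t, 0 ≤ t → M₁ (x t) = 1) :
    ∃ σ : ℝ, (σ = 1 ∨ σ = -1) ∧ (∀ t, 0 ≤ t → |x t 2| = σ * x t 2) ∧
      (∀ t, 0 ≤ t → eps (x t) = σ) := by
  have hcont := phi_contOn hx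
  have hne := phi_ne hx hall
  rcases lt_trichotomy (x 0 2) 0 with hneg | hzero | hpos
  · refine ⟨-1, Or.inr rfl, ?_, ?_⟩ <;> intro t ht
    all_goals {
      have hc : x t 2 < 0 := by
        by_contra hge; push_neg at hge
        have hsub : uIcc (0:ℝ) t ⊆ Ici 0 := by
          rw [uIcc_of_le ht]; exact fun u hu => hu.1
        have h0mem : (0:ℝ) ∈ uIcc (x 0 2) (x t 2) := by
          rw [Set.mem_uIcc]; exact Or.inl ⟨hneg.le, hge⟩
        obtain ⟨u, hu, hu0⟩ := intermediate_value_uIcc (hcont.mono hsub) h0mem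
        have hu0' : 0 ≤ u := hsub hu
        rcases eq_or_lt_of_le hu0' with h | h
        · rw [← h] at hu0; exact hneg.ne hu0
        · exact hne u h hu0
      first
      | (rw [abs_of_neg hc]; ring)
      | (unfold eps; rw [if_neg (not_le.mpr hc)]) }
  · refine ⟨1, Or.inl rfl, ?_, ?_⟩ <;> intro t ht
    all_goals {
      have hc : 0 ≤ x t 2 := by
        by_contra hlt; push_neg at hlt
        have htpos : 0 < t := by
          rcases eq_or_lt_of_le ht with h | h
          · exfalso; rw [← h] at hlt; exact hlt.ne hzero
          · exact h
        have hd := hDc hx 2 (le_refl 0)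
        rw [Dc_two_one (hall 0 le_rfl)] at hd
        have heps : eps (x 0) = 1 := by unfold eps; rw [if_pos (by rw [hzero])]
        rw [hzero, heps] at hd
        have hd2 : HasDerivWithinAt (fun u => x u 2) 1 (Ici 0) 0 := by
          simpa using hd
        have hslope := hasDerivWithinAt_iff_tendsto_slope.mp hd2
        rw [Set.Ici_sdiff_left] at hslope
        have hev : ∀ᶠ u in 𝓝[Set.Ioi (0:ℝ)] 0,
            0 < slope (fun u => x u 2) 0 u ∧ u ∈ Set.Ioi (0:ℝ) :=
          (hslope.eventually (eventually_gt_nhds one_pos)).and eventually_mem_nhdsWithin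
        obtain ⟨u, hupos, huI⟩ := hev.exists
        rw [slope_def_field, hzero, sub_zero, sub_zero] at hupos
        have hxu : 0 < x u 2 := by
          rcases div_pos_iff.mp hupos with ⟨h1, _⟩ | ⟨_, h2⟩
          · exact h1
          · exact absurd huI (not_lt.mpr h2.le)
        have hsub : uIcc t u ⊆ Ici 0 := fun r hr =>
          le_trans (le_min ht (le_of_lt huI)) hr.1
        have h0mem : (0:ℝ) ∈ uIcc (x t 2) (x u 2) := by
          rw [Set.mem_uIcc]; exact Or.inl ⟨hlt.le, hxu.le⟩
        obtain ⟨r, hr, hr0⟩ := intermediate_value_uIcc (hcont.mono hsub) h0mem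
        have hrpos : 0 < r := lt_of_lt_of_le (lt_min htpos huI) hr.1
        exact hne r hrpos hr0
      first
      | (rw [abs_of_nonneg hc]; ring)
      | (unfold eps; rw [if_pos hc]) }
  · refine ⟨1, Or.inl rfl, ?_, ?_⟩ <;> intro t ht
    all_goals {
      have hc : 0 < x t 2 := by
        by_contra hge; push_neg at hge
        have hsub : uIcc (0:ℝ) t ⊆ Ici 0 := by
          rw [uIcc_of_le ht]; exact fun u hu => hu.1
        have h0mem : (0:ℝ) ∈ uIcc (x 0 2) (x t 2) := by
          rw [Set.mem_uIcc]; exact Or.inr ⟨hge, hpos.le⟩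
        obtain ⟨u, hu, hu0⟩ := intermediate_value_uIcc (hcont.mono hsub) h0mem
        have hu0' : 0 ≤ u := hsub hu
        rcases eq_or_lt_of_le hu0' with h | h
        · rw [← h] at hu0; exact hpos.ne' hu0
        · exact hne u h hu0
      first
      | (rw [abs_of_pos hc]; ring)
      | (unfold eps; rw [if_pos hc.le]) }

end Traj

section Inv
variable {M₁ : E3 → ℝ} {x : ℝ → E3}
open scoped Topology

lemma M1cont (hM₁ : M1Hyp M₁) (hx : ClosedLoopSol M₁ (Kfb M₁) x) :
    Continuous (fun s => M₁ (x (max s 0))) := by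
  have hG : Continuous (fun p : Metric.sphere (0:E3) 1 => M₁ ↑p) := hM₁.smooth.continuous
  exact hG.comp (Continuous.subtype_mk (xhat_cont hx)
    (fun s => hx.1 _ (le_max_right _ _)))

/-- the pole has `M₁ = 1` -/
lemma M1_pole (hM₁ : M1Hyp M₁) {y : E3} (hy : y ∈ S2) (h : (y 2)^2 = 1) : M₁ y = 1 := by
  apply hM₁.one_of y hy
  right; right
  have : Vq y = 0 := by
    rw [Vq_eq]
    have : |y 2| = 1 := by
      have := sq_abs (y 2); nlinarith [abs_nonneg (y 2)]
    rw [this, Real.arccos_one]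
  rw [this]
  positivity

/-- Invariance of `M₁ = 1` along closed-loop solutions -/
lemma M1_inv (hM₁ : M1Hyp M₁) (hx : ClosedLoopSol M₁ (Kfb M₁) x) (h0 : M₁ (x 0) = 1) :
    ∀ t, 0 ≤ t → M₁ (x t) = 1 := by
  by_contra hcon; push_neg at hcon
  obtain ⟨t₀, ht₀, hne⟩ := hcon
  set E := {t : ℝ | 0 ≤ t ∧ M₁ (x t) ≠ 1} with hE
  have hE0 : t₀ ∈ E := ⟨ht₀, hne⟩
  have hEne : E.Nonempty := ⟨t₀, hE0⟩
  have hEbdd : BddBelow E := ⟨0, fun y hy => hy.1⟩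
  set τ := sInf E with hτ
  have hτ0 : 0 ≤ τ := le_csInf hEne (fun y hy => hy.1)
  have hτle : ∀ s, 0 ≤ s → s < τ → M₁ (x s) = 1 := by
    intro s hs hlt
    by_contra h
    exact absurd (csInf_le hEbdd ⟨hs, h⟩) (not_le.mpr hlt)
  have hτ1 : M₁ (x τ) = 1 := by
    rcases eq_or_lt_of_le hτ0 with h | hpos
    · rw [← h]; exact h0
    · have hm := M1cont hM₁ hx
      have hclosed : IsClosed {s : ℝ | M₁ (x (max s 0)) = 1} :=
        isClosed_eq hm continuous_const
      have hsub : Ico 0 τ ⊆ {s : ℝ | M₁ (x (max s 0)) = 1} := by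
        intro s hs
        have : max s 0 = s := max_eq_left hs.1
        simp only [Set.mem_setOf_eq, this]
        exact hτle s hs.1 hs.2
      have hτmem : τ ∈ closure (Ico 0 τ) := by
        rw [closure_Ico (ne_of_lt hpos)]
        exact ⟨hτ0, le_refl τ⟩
      have := hclosed.closure_subset ((closure_mono hsub) hτmem)
      simpa [max_eq_left hτ0] using this
  have hsq := S2_sq_le (hx.1 τ hτ0) 2
  rcases eq_or_lt_of_le hsq with hone | hlt
  · -- |x₃(τ)| = 1 : everything after is at the pole
    have ht₀τ : τ ≤ t₀ := csInf_le hEbdd hE0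
    have hw : (x t₀ 2)^2 = 1 :=
      le_antisymm (S2_sq_le (hx.1 t₀ ht₀) 2)
        (by have h5 : (x τ 2)^2 ≤ (x t₀ 2)^2 := w_mono hx hτ0 ht₀ ht₀τ
            rw [hone] at h5; exact h5)
    exact hne (M1_pole hM₁ (hx.1 t₀ ht₀) hw)
  · -- Darboux argument
    set c := 1 - (x τ 2)^2 with hc
    have hcpos : 0 < c := by rw [hc]; linarith
    -- continuity of squared third coordinate
    have hwcont : Continuous (fun s => (x (max s 0) 2)^2) := (xhat2_cont hx).pow 2
    obtain ⟨δ, hδpos, hδ⟩ :=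
      Metric.continuousAt_iff.mp (hwcont.continuousAt (x := τ)) (c/2) (by linarith)
    -- a bad time within δ of τ
    have hbad : ∃ t₁ ∈ E, t₁ < τ + δ := by
      by_contra h; push_neg at h
      have : τ + δ ≤ τ := le_csInf hEne h
      linarith
    obtain ⟨t₁, ht₁E, ht₁δ⟩ := hbad
    have ht₁τ : τ ≤ t₁ := csInf_le hEbdd ht₁E
    have ht₁ne : τ ≠ t₁ := fun h => ht₁E.2 (h ▸ hτ1)
    have ht₁gt : τ < t₁ := lt_of_le_of_ne ht₁τ ht₁ne
    -- bound on w on [τ, t₁]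
    have hwb : ∀ s, s ∈ Icc τ t₁ → (x s 2)^2 < 1 - c/2 := by
      intro s hs
      have hds : dist s τ < δ := by
        rw [Real.dist_eq, abs_of_nonneg (by linarith [hs.1])]
        linarith [hs.2]
      have := hδ hds
      rw [Real.dist_eq] at this
      have hmx : max s 0 = s := max_eq_left (le_trans hτ0 hs.1)
      have hmx2 : max τ 0 = τ := max_eq_left hτ0
      rw [hmx, hmx2] at this
      have habs := abs_lt.mp this
      rw [hc]; linarith [habs.2]
    -- Darboux setup
    have hder : ∀ s ∈ Icc τ t₁, HasDerivWithinAt (fun u => x u 2) (Dc M₁ x 2 s) (Icc τ t₁) s :=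
      fun s hs => (hDc hx 2 (le_trans hτ0 hs.1)).mono (fun u hu => le_trans hτ0 hu.1)
    have hDval : ∀ s ∈ Icc τ t₁, Dc M₁ x 2 s = 0 ∨ c/2 < |Dc M₁ x 2 s| := by
      intro s hs
      by_cases hM : M₁ (x s) = 1
      · right
        rw [Dc_two_one hM, abs_mul]
        have : |eps (x s)| = 1 := by rcases eps_cases (x s) with h | h <;> rw [h] <;> norm_num
        rw [this, one_mul, abs_of_nonneg (by nlinarith [S2_sq_le (hx.1 s (le_trans hτ0 hs.1)) 2] : (0:ℝ) ≤ 1 - (x s 2)^2)]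
        linarith [hwb s hs]
      · exact Or.inl (Dc_two_not hM)
    have hDτ : Dc M₁ x 2 τ = eps (x τ) * c := by
      rw [Dc_two_one hτ1, hc]
    have hDt₁ : Dc M₁ x 2 t₁ = 0 := Dc_two_not ht₁E.2
    have hmemτ : τ ∈ Icc τ t₁ := ⟨le_refl _, ht₁τ⟩
    rcases eps_cases (x τ) with hep | hep
    · -- derivative c at τ, 0 at t₁; m = c/2
      have h1 : (c/2 : ℝ) < Dc M₁ x 2 τ := by rw [hDτ, hep, one_mul]; linarith
      have h2 : Dc M₁ x 2 t₁ < c/2 := by rw [hDt₁]; linarith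
      obtain ⟨s, hsIoo, hsval⟩ :=
        exists_hasDerivWithinAt_eq_of_lt_of_gt (le_of_lt ht₁gt) hder h1 h2
      have hsIcc : s ∈ Icc τ t₁ := ⟨hsIoo.1.le, hsIoo.2.le⟩
      rcases hDval s hsIcc with h | h
      · rw [hsval] at h; linarith
      · rw [hsval, abs_of_pos (by linarith)] at h; linarith
    · have h1 : Dc M₁ x 2 τ < -(c/2) := by rw [hDτ, hep]; linarith
      have h2 : -(c/2) < Dc M₁ x 2 t₁ := by rw [hDt₁]; linarith
      obtain ⟨s, hsIoo, hsval⟩ :=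
        exists_hasDerivWithinAt_eq_of_gt_of_lt (le_of_lt ht₁gt) hder h1 h2
      have hsIcc : s ∈ Icc τ t₁ := ⟨hsIoo.1.le, hsIoo.2.le⟩
      rcases hDval s hsIcc with h | h
      · rw [hsval] at h; linarith
      · rw [hsval, abs_of_neg (by linarith)] at h; linarith

end Inv

section Key
variable {M₁ : E3 → ℝ} {x : ℝ → E3}
open scoped Topology

lemma ghat_cont (hx : ClosedLoopSol M₁ (Kfb M₁) x) :
    Continuous (fun s => Real.sqrt (1 - (x (max s 0) 2)^2)) :=
  Real.continuous_sqrt.comp (continuous_const.sub ((xhat2_cont hx).pow 2))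

lemma key_eq (hx : ClosedLoopSol M₁ (Kfb M₁) x) (hall : ∀ t, 0 ≤ t → M₁ (x t) = 1)
    {σ : ℝ} (hσ : σ = 1 ∨ σ = -1) (habs : ∀ t, 0 ≤ t → |x t 2| = σ * x t 2)
    (hεσ : ∀ t, 0 ≤ t → eps (x t) = σ) :
    ∀ t, 0 ≤ t → Real.arccos (σ * x t 2)
      = Real.arccos (σ * x 0 2) - ∫ s in (0:ℝ)..t, Real.sqrt (1 - (x (max s 0) 2)^2) := by
  set g : ℝ → ℝ := fun s => Real.sqrt (1 - (x (max s 0) 2)^2) with hgdef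
  have hgc : Continuous g := ghat_cont hx
  set h : ℝ → ℝ := fun t => Real.arccos (σ * x t 2) + ∫ s in (0:ℝ)..t, g s with hh
  have hIcont : Continuous (fun t => ∫ s in (0:ℝ)..t, g s) :=
    continuous_iff_continuousAt.mpr
      (fun t => ((hgc.integral_hasStrictDerivAt 0 t).hasDerivAt).continuousAt)
  have hσ2 : σ * σ = 1 := by rcases hσ with h'|h' <;> rw [h'] <;> norm_num
  have hd : ∀ t, 0 ≤ t → HasDerivWithinAt h 0 (Ici t) t := by
    intro t ht
    have hsq : (x t 2)^2 ≤ 1 := S2_sq_le (hx.1 t ht) 2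
    rcases eq_or_lt_of_le hsq with hone | hlt
    · -- h is constant on `Ici t`
      have hconst : ∀ u ∈ Ici t, h u = h t := by
        intro u hu
        have hu' : t ≤ u := hu
        have hwu : ∀ s, t ≤ s → (x s 2)^2 = 1 := by
          intro s h1
          refine le_antisymm (S2_sq_le (hx.1 s (le_trans ht h1)) 2) ?_
          have h5 : (x t 2)^2 ≤ (x s 2)^2 := w_mono hx ht (le_trans ht h1) h1
          rw [hone] at h5; linarith
        have harc : ∀ s, t ≤ s → Real.arccos (σ * x s 2) = 0 := by
          intro s h1
          have h2 : σ * x s 2 = 1 := by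
            have h3 := habs s (le_trans ht h1)
            have h4 := hwu s h1
            nlinarith [abs_nonneg (x s 2), sq_abs (x s 2)]
          rw [h2, Real.arccos_one]
        have hgz : ∀ s ∈ uIcc t u, g s = (0:ℝ) := by
          intro s hs
          rw [uIcc_of_le hu'] at hs
          have hs0 : 0 ≤ s := le_trans ht hs.1
          have : max s 0 = s := max_eq_left hs0
          rw [hgdef]
          simp only [this]
          rw [hwu s hs.1]
          simp
        have hint : ∫ s in t..u, g s = 0 := by
          rw [intervalIntegral.integral_congr hgz]; simp
        have hsplit : (∫ s in (0:ℝ)..t, g s) + ∫ s in t..u, g s = ∫ s in (0:ℝ)..u, g s :=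
          intervalIntegral.integral_add_adjacent_intervals
            (hgc.intervalIntegrable 0 t) (hgc.intervalIntegrable t u)
        rw [hh]
        simp only []
        rw [harc u hu', harc t (le_refl t), ← hsplit, hint]
        ring
      exact (hasDerivWithinAt_const t _ (h t)).congr hconst (hconst t self_mem_Ici)
    · -- differentiable case
      have hmono' : Ici t ⊆ Ici (0:ℝ) := fun u hu => le_trans ht hu
      have hDer : HasDerivWithinAt (fun s => σ * x s 2) (1 - (x t 2)^2) (Ici t) t := by
        have h1 := ((hDc hx 2 ht).mono hmono').const_mul σ
        rw [Dc_two_one (hall t ht), hεσ t ht] at h1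
        refine h1.congr_deriv ?_
        rw [← mul_assoc, hσ2, one_mul]
      have hs2 : σ^2 = 1 := by rw [sq]; exact hσ2
      have hsqeq : (σ * x t 2)^2 = (x t 2)^2 := by rw [mul_pow, hs2, one_mul]
      have hne1 : σ * x t 2 ≠ 1 := by
        intro hcontra
        rw [← hsqeq] at hlt; rw [hcontra] at hlt; norm_num at hlt
      have hnem1 : σ * x t 2 ≠ -1 := by
        intro hcontra
        rw [← hsqeq] at hlt; rw [hcontra] at hlt; norm_num at hlt
      have harc := (Real.hasDerivAt_arccos hnem1 hne1).comp_hasDerivWithinAt t hDer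
      have hI : HasDerivWithinAt (fun u => ∫ s in (0:ℝ)..u, g s) (g t) (Ici t) t :=
        ((hgc.integral_hasStrictDerivAt 0 t).hasDerivAt).hasDerivWithinAt
      have hsum := harc.add hI
      have hval : -(1 / Real.sqrt (1 - (σ * x t 2)^2)) * (1 - (x t 2)^2) + g t = 0 := by
        rw [hsqeq]
        have hpos : 0 < 1 - (x t 2)^2 := by linarith
        have hgt : g t = Real.sqrt (1 - (x t 2)^2) := by
          rw [hgdef]; simp only [max_eq_left ht]
        rw [hgt]
        have hmul := Real.mul_self_sqrt hpos.le
        have hsne : Real.sqrt (1 - (x t 2)^2) ≠ 0 := ne_of_gt (Real.sqrt_pos.mpr hpos)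
        field_simp
        rw [Real.sq_sqrt hpos.le]; ring
      have hsum0 : HasDerivWithinAt
          (fun u => Real.arccos (σ * x u 2) + ∫ s in (0:ℝ)..u, g s) 0 (Ici t) t := by
        exact hsum.congr_deriv hval
      exact hsum0
  intro t ht
  have hcont : ContinuousOn h (Icc 0 t) := by
    apply ContinuousOn.add
    · exact Real.continuous_arccos.comp_continuousOn
        (continuousOn_const.mul ((phi_contOn hx).mono (fun u hu => hu.1)))
    · exact hIcont.continuousOn
  have hzero := constant_of_has_deriv_right_zero hcont (fun s hs => hd s hs.1)
  have hfin := hzero t ⟨ht, le_refl t⟩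
  rw [hh] at hfin
  simp only [intervalIntegral.integral_same] at hfin
  linarith [hfin]

end Key

section Final
variable {M₁ : E3 → ℝ} {x : ℝ → E3}
open scoped Topology

lemma abs_of_sign {c v : ℝ} (hc : c = 1 ∨ c = -1) (h : 0 < c * v) : |v| = c * v := by
  rcases hc with h' | h' <;> subst h'
  · rw [one_mul] at h ⊢; exact abs_of_pos h
  · have hv : v < 0 := by nlinarith
    rw [abs_of_neg hv]; ring

lemma neg_one_div_sqrt {c : ℝ} (h : 0 < c) : -(1 / Real.sqrt c) * c = -Real.sqrt c := by
  have : -(1 / Real.sqrt c) * c = -(c / Real.sqrt c) := by ring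
  rw [this, Real.div_sqrt]

lemma ghat_integral {t : ℝ} (ht : 0 ≤ t) :
    (∫ s in (0:ℝ)..t, Real.sqrt (1 - (x (max s 0) 2)^2))
      = ∫ s in (0:ℝ)..t, Real.sqrt (1 - (x s 2)^2) := by
  apply intervalIntegral.integral_congr
  intro s hs
  rw [uIcc_of_le ht] at hs
  simp only [max_eq_left hs.1]

lemma x1sq_anti (hx : ClosedLoopSol M₁ (Kfb M₁) x) (hall : ∀ t, 0 ≤ t → M₁ (x t) = 1) :
    AntitoneOn (fun s => (x s 1)^2) (Ici 0) := by
  apply antitoneOn_of_deriv_nonpos (convex_Ici 0)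
  · exact fun t ht => ((hDc hx 1 ht).continuousWithinAt).pow 2
  · intro t ht; rw [interior_Ici] at ht
    exact (((hDc hx 1 ht.le).hasDerivAt (Ici_mem_nhds ht)).pow 2).differentiableAt.differentiableWithinAt
  · intro t ht; rw [interior_Ici] at ht
    have hd : HasDerivAt (fun s => (x s 1)^2) (2 * x t 1 * Dc M₁ x 1 t) t := by
      have h := ((hDc hx 1 ht.le).hasDerivAt (Ici_mem_nhds ht)).pow 2
      refine h.congr_deriv ?_; push_cast; ring
    rw [hd.deriv, Dc_one_one (hall t ht.le)]
    have h1 := eps_mul (x t)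
    have key : 2 * x t 1 * (eps (x t) * (-(x t 2 * x t 1))) = -(2 * |x t 2| * (x t 1)^2) := by
      rw [← h1]; ring
    rw [key]
    have h2 := abs_nonneg (x t 2)
    nlinarith [sq_nonneg (x t 1)]

lemma Vr_le (hx : ClosedLoopSol M₁ (Kfb M₁) x) (hall : ∀ t, 0 ≤ t → M₁ (x t) = 1)
    {t : ℝ} (ht : 0 ≤ t) : Vr (x t) ≤ Vr (x 0) := by
  rw [Vr_eq, Vr_eq]
  apply arccos_antitone
  have h : (x t 1)^2 ≤ (x 0 1)^2 := x1sq_anti hx hall self_mem_Ici ht ht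
  have habs : |x t 1| ≤ |x 0 1| := by
    rw [← Real.sqrt_sq_eq_abs, ← Real.sqrt_sq_eq_abs]
    exact Real.sqrt_le_sqrt h
  linarith

/-- Part 1: pointwise strict decay. -/
lemma part1 (hx : ClosedLoopSol M₁ (Kfb M₁) x) {t : ℝ} (ht : 0 ≤ t)
    (h1 : x t 1 ≠ 0) (h2 : x t 2 ≠ 0) (hM : M₁ (x t) = 1) :
    ∃ d : ℝ, HasDerivWithinAt (fun s => Vlyap (x s)) d (Ici 0) t ∧
      d ≤ -Real.sqrt (1 - (inner ℝ (x t) qv : ℝ)^2) := by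
  set a := x t 1 with ha
  set b := x t 2 with hb
  set ε := eps (x t) with hε
  have hεc : ε = 1 ∨ ε = -1 := eps_cases (x t)
  set σ₂ : ℝ := if 0 < a then 1 else -1 with hσ₂
  have hσ₂c : σ₂ = 1 ∨ σ₂ = -1 := by rw [hσ₂]; split_ifs <;> simp
  have hσ₂a : σ₂ * a = |a| := by
    rw [hσ₂]; rcases lt_trichotomy 0 a with h | h | h
    · rw [if_pos h, abs_of_pos h]; ring
    · exact absurd h.symm h1
    · rw [if_neg (not_lt.mpr h.le), abs_of_neg h]; ring
  have hεb : ε * b = |b| := eps_mul (x t)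
  have hsum := S2_sum (hx.1 t ht)
  have hb2pos : 0 < b^2 := by
    rcases (sq_nonneg b).eq_or_lt with h | h
    · exact absurd (sq_eq_zero_iff.mp h.symm) h2
    · exact h
  have ha2pos : 0 < a^2 := by
    rcases (sq_nonneg a).eq_or_lt with h | h
    · exact absurd (sq_eq_zero_iff.mp h.symm) h1
    · exact h
  have ha2 : a^2 < 1 := by nlinarith [sq_nonneg (x t 0)]
  have hb2 : b^2 < 1 := by nlinarith [sq_nonneg (x t 0)]
  -- derivatives of coordinates
  have hder1 := hDc hx 1 ht
  rw [Dc_one_one hM] at hder1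
  have hder2 := hDc hx 2 ht
  rw [Dc_two_one hM] at hder2
  -- pointwise description of Vlyap on the sphere near t
  set F : ℝ → ℝ :=
    fun s => Real.arccos (ε * x s 2) * (1 + Real.arccos (-(σ₂ * x s 1))) with hF
  have heqpt : ∀ s, x s ∈ S2 → 0 < σ₂ * x s 1 → 0 < ε * x s 2 → Vlyap (x s) = F s := by
    intro s hS hs2 hs3
    rw [Vlyap, Vq_eq, Vr_eq, hF]
    rw [abs_of_sign hεc hs3, abs_of_sign hσ₂c hs2]
  have hev2 : ∀ᶠ s in 𝓝[Ici 0] t, 0 < σ₂ * x s 1 := by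
    have hcont : ContinuousWithinAt (fun s => σ₂ * x s 1) (Ici 0) t :=
      continuousWithinAt_const.mul hder1.continuousWithinAt
    exact hcont.eventually (eventually_gt_nhds
      (show (0:ℝ) < σ₂ * a by rw [hσ₂a]; exact abs_pos.mpr h1))
  have hev3 : ∀ᶠ s in 𝓝[Ici 0] t, 0 < ε * x s 2 := by
    have hcont : ContinuousWithinAt (fun s => ε * x s 2) (Ici 0) t :=
      continuousWithinAt_const.mul hder2.continuousWithinAt
    exact hcont.eventually (eventually_gt_nhds
      (show (0:ℝ) < ε * b by rw [hεb]; exact abs_pos.mpr h2))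
  have hevS : ∀ᶠ s in 𝓝[Ici 0] t, x s ∈ S2 :=
    eventually_mem_nhdsWithin.mono (fun s hs => hx.1 s hs)
  have heq : (fun s => Vlyap (x s)) =ᶠ[𝓝[Ici 0] t] F := by
    filter_upwards [hev2, hev3, hevS] with s hs2 hs3 hsS
    exact heqpt s hsS hs2 hs3
  have heqt : Vlyap (x t) = F t :=
    heqpt t (hx.1 t ht) (by rw [hσ₂a]; exact abs_pos.mpr h1)
      (by rw [hεb]; exact abs_pos.mpr h2)
  -- derivative of F at t
  have hεsq : ε * ε = 1 := eps_sq (x t)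
  have hin2 : HasDerivWithinAt (fun s => ε * x s 2) (1 - b^2) (Ici 0) t := by
    have h := hder2.const_mul ε
    refine h.congr_deriv ?_
    rw [← mul_assoc, hεsq, one_mul]
  have hsq2 : (ε * b)^2 = b^2 := by rw [mul_pow, sq, hεsq, one_mul]
  have hne2a : ε * b ≠ -1 := by intro h; rw [← hsq2] at hb2; rw [h] at hb2; norm_num at hb2
  have hne2b : ε * b ≠ 1 := by intro h; rw [← hsq2] at hb2; rw [h] at hb2; norm_num at hb2
  have hf1 := (Real.hasDerivAt_arccos hne2a hne2b).comp_hasDerivWithinAt t hin2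
  have hin1 : HasDerivWithinAt (fun s => -(σ₂ * x s 1)) (|a| * |b|) (Ici 0) t := by
    have h := (hder1.const_mul σ₂).neg
    refine h.congr_deriv ?_
    rw [← hσ₂a, ← hεb]; ring
  have hsq1 : (-(σ₂ * a))^2 = a^2 := by
    rw [neg_sq, mul_pow]
    rcases hσ₂c with h | h <;> rw [h] <;> norm_num
  have hne1a : -(σ₂ * a) ≠ -1 := by intro h; rw [← hsq1] at ha2; rw [h] at ha2; norm_num at ha2
  have hne1b : -(σ₂ * a) ≠ 1 := by intro h; rw [← hsq1] at ha2; rw [h] at ha2; norm_num at ha2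
  have hf2' := (Real.hasDerivAt_arccos hne1a hne1b).comp_hasDerivWithinAt t hin1
  have hf2 := hf2'.const_add 1
  have hprod := hf1.mul hf2
  refine ⟨_, hprod.congr_of_eventuallyEq heq heqt, ?_⟩
  -- now the bound
  rw [inner_qv, ← hb]
  simp only [Function.comp_apply]
  have e1 : -(1 / Real.sqrt (1 - (ε * x t 2)^2)) = -(1 / Real.sqrt (1 - b^2)) := by
    rw [← hb, hsq2]
  have e2 : -(1 / Real.sqrt (1 - (-(σ₂ * x t 1))^2)) = -(1 / Real.sqrt (1 - a^2)) := by
    rw [← ha, hsq1]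
  have hb2p : 0 < 1 - b^2 := by linarith
  have ha2p : 0 < 1 - a^2 := by linarith
  have hsb := Real.sqrt_nonneg (1 - b^2)
  have hsa := Real.sqrt_pos.mpr ha2p
  have harc2 := Real.arccos_nonneg (-(σ₂ * x t 1))
  have harc3 := Real.arccos_nonneg (ε * x t 2)
  have hkey : -(1 / Real.sqrt (1 - (ε * x t 2)^2)) * (1 - b^2) = -Real.sqrt (1 - b^2) := by
    rw [e1]; exact neg_one_div_sqrt hb2p
  have hD2 : -(1 / Real.sqrt (1 - (-(σ₂ * x t 1))^2)) * (|a| * |b|) ≤ 0 := by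
    rw [e2]
    have h5 : 0 < 1 / Real.sqrt (1 - a^2) := by positivity
    nlinarith [abs_nonneg a, abs_nonneg b, mul_nonneg (abs_nonneg a) (abs_nonneg b)]
  simp only [← ha, ← hb] at hD2 harc2 harc3 hkey ⊢
  rw [hkey]
  nlinarith [mul_nonneg hsb harc2, mul_nonneg harc3 (neg_nonneg.mpr hD2)]

end Final

section Parts
variable {M₁ : E3 → ℝ} {x : ℝ → E3}
open scoped Topology

lemma part2 (hM₁ : M1Hyp M₁) (hx : ClosedLoopSol M₁ (Kfb M₁) x)
    (h12 : ∀ t, 0 ≤ t → x t 1 = 0 ∧ x t 2 ≠ 0) {t : ℝ} (ht : 0 ≤ t) :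
    HasDerivWithinAt (fun s => Vlyap (x s))
      (-(1 + Real.pi / 2) * Real.sqrt (1 - (x t 2)^2)) (Ici 0) t := by
  have hall : ∀ s, 0 ≤ s → M₁ (x s) = 1 := by
    intro s hs
    apply hM₁.one_of _ (hx.1 s hs)
    rcases le_or_gt 0 (x s 0) with h | h
    · right; left; rw [(h12 s hs).1]
      exact div_nonneg h (by norm_num)
    · left; rw [(h12 s hs).1]
      linarith
  obtain ⟨σ, hσ, habs, hεσ⟩ := sigma_ex hx hall
  have hkey := key_eq hx hall hσ habs hεσ
  set g : ℝ → ℝ := fun s => Real.sqrt (1 - (x (max s 0) 2)^2) with hg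
  have hgc : Continuous g := ghat_cont hx
  set F : ℝ → ℝ := fun s =>
    (Real.arccos (σ * x 0 2) - ∫ u in (0:ℝ)..s, g u) * (1 + Real.pi/2) with hF
  have hVF : ∀ s ∈ Ici (0:ℝ), Vlyap (x s) = F s := by
    intro s hs
    rw [Vlyap, Vq_eq, Vr_eq, (h12 s hs).1, habs s hs, hkey s hs, hF]
    norm_num [Real.arccos_zero]
  have hFd : HasDerivWithinAt F (-(g t) * (1 + Real.pi/2)) (Ici 0) t := by
    have hI : HasDerivWithinAt (fun u => ∫ s in (0:ℝ)..u, g s) (g t) (Ici 0) t :=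
      ((hgc.integral_hasStrictDerivAt 0 t).hasDerivAt).hasDerivWithinAt
    have h2 := (hI.const_sub (Real.arccos (σ * x 0 2))).mul_const (1 + Real.pi/2)
    convert h2 using 1
  have hmain : HasDerivWithinAt (fun s => Vlyap (x s)) (-(g t) * (1 + Real.pi/2)) (Ici 0) t :=
    hFd.congr hVF (hVF t ht)
  convert hmain using 1
  rw [hg]; simp only [max_eq_left ht]; ring

lemma part3 (hM₁ : M1Hyp M₁) (hx : ClosedLoopSol M₁ (Kfb M₁) x) (hM0 : M₁ (x 0) = 1)
    {t : ℝ} (ht : 0 ≤ t) :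
    Vlyap (x t) - Vlyap (x 0) ≤ -∫ s in (0:ℝ)..t, Real.sqrt (1 - (x s 2)^2) := by
  have hall := M1_inv hM₁ hx hM0
  obtain ⟨σ, hσ, habs, hεσ⟩ := sigma_ex hx hall
  have hkey := key_eq hx hall hσ habs hεσ t ht
  rw [ghat_integral ht] at hkey
  set I := ∫ s in (0:ℝ)..t, Real.sqrt (1 - (x s 2)^2) with hI
  have hInn : 0 ≤ I :=
    intervalIntegral.integral_nonneg ht (fun s _ => Real.sqrt_nonneg _)
  have hVq_t : Vq (x t) = Vq (x 0) - I := by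
    rw [Vq_eq, Vq_eq, habs t ht, habs 0 (le_refl 0), hkey]
  have hVr := Vr_le hx hall ht
  have hVq00 : 0 ≤ Vq (x 0) := by rw [Vq_eq]; exact Real.arccos_nonneg _
  have hVr0 : 0 ≤ Vr (x 0) := by rw [Vr_eq]; exact Real.arccos_nonneg _
  have hVrt : 0 ≤ Vr (x t) := by rw [Vr_eq]; exact Real.arccos_nonneg _
  rw [Vlyap, Vlyap, hVq_t]
  nlinarith [mul_nonneg hVq00 (sub_nonneg.mpr hVr), mul_nonneg hInn hVrt]

end Parts

/-- **Lyapunov decay along closed-loop trajectories in `M₁⁻¹(1)`.**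
Along any classical closed-loop trajectory for the feedback `K`:
at every time `t ≥ 0` where `x₂ ≠ 0`, `x₃ ≠ 0`, `M₁(x) = 1` and `x ∉ {±q}`,
`d/dt V(x(t)) ≤ -√(1-(x⬝q)²)`; along trajectories lying in `{x₂ = 0, x₃ ≠ 0}`,
`d/dt V(x(t)) = -(1+π/2)√(1-x₃²)`; and every closed-loop trajectory starting in
`M₁⁻¹(1)` satisfies `V(x(t)) - V(x(0)) ≤ -∫₀ᵗ √(1-x₃(s)²) ds`. -/
theorem lyapunov_decay_on_M1_eq_one (M₁ : E3 → ℝ) (hM₁ : M1Hyp M₁)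
    (x : ℝ → E3) (hx : ClosedLoopSol M₁ (Kfb M₁) x) :
    (∀ t, 0 ≤ t → x t 1 ≠ 0 → x t 2 ≠ 0 → M₁ (x t) = 1 → x t ∉ attrA →
      ∃ d : ℝ, HasDerivWithinAt (fun s => Vlyap (x s)) d (Ici 0) t ∧
        d ≤ -Real.sqrt (1 - (inner ℝ (x t) qv : ℝ) ^ 2)) ∧
    ((∀ t, 0 ≤ t → x t 1 = 0 ∧ x t 2 ≠ 0) →
      ∀ t, 0 ≤ t →
        HasDerivWithinAt (fun s => Vlyap (x s))
          (-(1 + Real.pi / 2) * Real.sqrt (1 - (x t 2) ^ 2)) (Ici 0) t) ∧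
    (M₁ (x 0) = 1 →
      ∀ t, 0 ≤ t →
        Vlyap (x t) - Vlyap (x 0) ≤ -∫ s in (0 : ℝ)..t, Real.sqrt (1 - (x s 2) ^ 2)) := by
  refine ⟨?_, ?_, ?_⟩
  · intro t ht h1 h2 hM _
    exact part1 hx ht h1 h2 hM
  · intro h12 t ht
    exact part2 hM₁ hx h12 ht
  · intro hM0 t ht
    exact part3 hM₁ hx hM0 ht
end
end

section
/- Let p₂, p₃, p₄ > 0, let q₀ ∈ R^k, set c = 4p₂p₃/p₄ and T₂ = max{0, (|q₀| − p₄/4)/(p₂p₃)}, and let q: [0,∞) → R^k solve q̇(t) = v(t)q(t) with q(0) = q₀, where v(t) = −c for t ∈ [0,T₂] and v(t) = 0 for t > T₂. Then t ↦ |q(t)| is non-increasing on [0,∞), |q(T₂)| ≤ p₄/4, and hence |q(t)| ≤ p₄/4 for all t ≥ T₂. Moreover, whenever |q(t)| ≥ p₄/4 and t ∈ [0,T₂], one has d|q(t)|/dt = −c|q(t)| ≤ −p₂p₃. -/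
open Set

noncomputable section

/-- **Key normal-component estimate.** Let `p₂ p₃ p₄ > 0`, `q₀ ∈ ℝ^k`,
`c = 4p₂p₃/p₄`, `T₂ = max {0, (|q₀| - p₄/4)/(p₂p₃)}`, and let
`q : [0,∞) → ℝ^k` be the solution of `q̇ = v q`, `q 0 = q₀`, where
`v ≡ -c` on `[0,T₂]` and `v ≡ 0` afterwards; explicitly
`q t = exp (∫₀ᵗ v) • q₀`.  Then `t ↦ |q t|` is non-increasing on `[0,∞)`,
`|q T₂| ≤ p₄/4`, hence `|q t| ≤ p₄/4` for all `t ≥ T₂`; moreover whenever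
`t ∈ [0,T₂]` and `|q t| ≥ p₄/4`, the derivative of `|q (·)|` (within `[0,T₂]`)
is `-c * |q t| ≤ -p₂ p₃`. -/
theorem normal_component_estimate {k : ℕ} (p₂ p₃ p₄ : ℝ)
    (hp₂ : 0 < p₂) (hp₃ : 0 < p₃) (hp₄ : 0 < p₄)
    (q₀ : EuclideanSpace ℝ (Fin k)) (c T₂ : ℝ)
    (hc : c = 4 * p₂ * p₃ / p₄)
    (hT₂ : T₂ = max 0 ((‖q₀‖ - p₄ / 4) / (p₂ * p₃)))
    (v : ℝ → ℝ)
    (hv : ∀ t ∈ Icc (0 : ℝ) T₂, v t = -c) (hv' : ∀ t, T₂ < t → v t = 0)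
    (q : ℝ → EuclideanSpace ℝ (Fin k))
    (hq : ∀ t, q t = Real.exp (∫ s in (0:ℝ)..t, v s) • q₀) :
    AntitoneOn (fun t => ‖q t‖) (Ici (0 : ℝ)) ∧
    ‖q T₂‖ ≤ p₄ / 4 ∧
    (∀ t, T₂ ≤ t → ‖q t‖ ≤ p₄ / 4) ∧
    (∀ t ∈ Icc (0 : ℝ) T₂, p₄ / 4 ≤ ‖q t‖ →
      HasDerivWithinAt (fun s => ‖q s‖) (-c * ‖q t‖) (Icc (0 : ℝ) T₂) t ∧
      -c * ‖q t‖ ≤ -(p₂ * p₃)) := by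
  have hcpos : 0 < c := by rw [hc]; positivity
  have hT₂0 : 0 ≤ T₂ := by rw [hT₂]; exact le_max_left _ _
  -- the integral of v
  have hint : ∀ t, 0 ≤ t → (∫ s in (0:ℝ)..t, v s) = -(c * min t T₂) := by
    intro t ht
    have hcongr : ∀ s ∈ uIcc (0:ℝ) t, v s = Set.indicator {x | x ≤ T₂} (fun _ => -c) s := by
      intro s hs
      rw [uIcc_of_le ht] at hs
      by_cases hsT : s ≤ T₂
      · rw [hv s ⟨hs.1, hsT⟩]
        exact (Set.indicator_of_mem (s := {x | x ≤ T₂}) (a := s) hsT (fun _ => -c)).symm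
      · rw [hv' s (not_le.1 hsT)]
        exact (Set.indicator_of_notMem (s := {x | x ≤ T₂}) (a := s) hsT (fun _ => -c)).symm
    rw [intervalIntegral.integral_congr hcongr]
    by_cases htT : t ≤ T₂
    · have : ∀ s ∈ uIcc (0:ℝ) t, Set.indicator {x | x ≤ T₂} (fun _ => (-c : ℝ)) s = -c := by
        intro s hs
        rw [uIcc_of_le ht] at hs
        exact Set.indicator_of_mem (s := {x | x ≤ T₂}) (a := s) (hs.2.trans htT) (fun _ => -c)
      rw [intervalIntegral.integral_congr this, intervalIntegral.integral_const,
        min_eq_left htT]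
      ring_nf
    · push_neg at htT
      rw [intervalIntegral.integral_indicator ⟨hT₂0, htT.le⟩,
        intervalIntegral.integral_const, min_eq_right htT.le]
      ring_nf
  have hnorm : ∀ t, 0 ≤ t → ‖q t‖ = Real.exp (-(c * min t T₂)) * ‖q₀‖ := by
    intro t ht
    rw [hq t, norm_smul, Real.norm_eq_abs, abs_of_pos (Real.exp_pos _), hint t ht]
  constructor
  · intro s hs t ht hst
    show ‖q t‖ ≤ ‖q s‖
    rw [hnorm s hs, hnorm t ht]
    have : min s T₂ ≤ min t T₂ := min_le_min hst le_rfl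
    have := Real.exp_le_exp.2 (neg_le_neg (mul_le_mul_of_nonneg_left this hcpos.le))
    exact mul_le_mul_of_nonneg_right this (norm_nonneg _)
  have key2 : ‖q T₂‖ ≤ p₄ / 4 := by
    rw [hnorm T₂ hT₂0, min_self]
    by_cases h0 : (‖q₀‖ - p₄ / 4) / (p₂ * p₃) ≤ 0
    · have hT : T₂ = 0 := by rw [hT₂, max_eq_left h0]
      have hq0 : ‖q₀‖ ≤ p₄ / 4 := by
        have := div_nonpos_iff.1 h0
        rcases this with ⟨h1, h2⟩ | ⟨h1, h2⟩
        · nlinarith [mul_pos hp₂ hp₃]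
        · linarith
      rw [hT]; simp [hq0]
    · push_neg at h0
      have hT : T₂ = (‖q₀‖ - p₄ / 4) / (p₂ * p₃) := by rw [hT₂, max_eq_right h0.le]
      have hpp : 0 < p₂ * p₃ := mul_pos hp₂ hp₃
      have hcT : c * T₂ = 4 * ‖q₀‖ / p₄ - 1 := by
        rw [hc, hT]; field_simp
      rw [hcT]
      have hx : 4 * ‖q₀‖ / p₄ - 1 + 1 ≤ Real.exp (4 * ‖q₀‖ / p₄ - 1) :=
        Real.add_one_le_exp _
      have hE : 0 < Real.exp (4 * ‖q₀‖ / p₄ - 1) := Real.exp_pos _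
      rw [Real.exp_neg]
      rw [inv_mul_le_iff₀ hE]
      have hq0' : 0 < ‖q₀‖ := by
        by_contra h
        push_neg at h
        have : ‖q₀‖ = 0 := le_antisymm h (norm_nonneg _)
        rw [this] at h0
        have hneg : (0 - p₄ / 4) / (p₂ * p₃) < 0 :=
          div_neg_of_neg_of_pos (by linarith) hpp
        linarith
      have : 4 * ‖q₀‖ / p₄ ≤ Real.exp (4 * ‖q₀‖ / p₄ - 1) := by linarith
      have hfin : ‖q₀‖ ≤ p₄ / 4 * Real.exp (4 * ‖q₀‖ / p₄ - 1) := by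
        calc ‖q₀‖ = p₄ / 4 * (4 * ‖q₀‖ / p₄) := by field_simp
          _ ≤ p₄ / 4 * Real.exp (4 * ‖q₀‖ / p₄ - 1) :=
              mul_le_mul_of_nonneg_left this (by positivity)
      linarith [hfin, mul_comm (p₄ / 4) (Real.exp (4 * ‖q₀‖ / p₄ - 1))]
  refine ⟨key2, fun t ht => ?_, ?_⟩
  · have habove : ‖q t‖ = ‖q T₂‖ := by
      rw [hnorm t (hT₂0.trans ht), hnorm T₂ hT₂0, min_self, min_eq_right ht]
    rw [habove]; exact key2
  · intro t ht hge
    constructor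
    · have heq : ∀ s ∈ Icc (0:ℝ) T₂, ‖q s‖ = Real.exp (-(c * s)) * ‖q₀‖ := by
        intro s hs
        rw [hnorm s hs.1, min_eq_left hs.2]
      have hD : HasDerivAt (fun s => Real.exp (-(c * s)) * ‖q₀‖)
          (-c * (Real.exp (-(c * t)) * ‖q₀‖)) t := by
        have h1 : HasDerivAt (fun s : ℝ => -(c * s)) (-c) t := by
          have h := ((hasDerivAt_id t).const_mul c).neg; rw [mul_one] at h; exact h
        have h2 := h1.exp
        have := h2.mul_const ‖q₀‖
        exact this.congr_deriv (by ring)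
      have := hD.hasDerivWithinAt (s := Icc (0:ℝ) T₂)
      have := this.congr heq (heq t ht)
      refine this.congr_deriv ?_
      rw [hnorm t ht.1, min_eq_left ht.2]
    · have : p₂ * p₃ ≤ c * ‖q t‖ := by
        have h1 : c * (p₄ / 4) ≤ c * ‖q t‖ := mul_le_mul_of_nonneg_left hge hcpos.le
        have h2 : c * (p₄ / 4) = p₂ * p₃ := by rw [hc]; field_simp
        linarith
      linarith
end
end
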